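/- arXiv:1505.02610 — 6 statements merged into one kernel-verified Lean document; each statement's English description precedes it below -/
import Mathlib

section
/- Let V be a finite-dimensional vector space over a field K and let v, w : Fin n → V be two bases of V. Then there exists a permutation σ of Fin n such that for every i, the family obtained from v by replacing v i with w (σ i) (i.e. Function.update v i (w (σ i))) is again a basis of V. -/
/-- **Basis exchange with a permutation.**
Given two bases `v, w : Fin n → V` of a vector space `V` over a field `K`,
there is a permutation `σ` of `Fin n` such that for every `i`, replacing `v i`
by `w (σ i)` in the family `v` again yields a basis of `V`. -/
theorem basis_exchange_perm {K V : Type*} [Field K] [AddCommGroup V] [Module K V]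
    {n : ℕ} (v w : Module.Basis (Fin n) K V) :
    ∃ σ : Equiv.Perm (Fin n), ∀ i : Fin n,
      ∃ b : Module.Basis (Fin n) K V, ⇑b = Function.update (⇑v) i (w (σ i)) := by
  set M := v.toMatrix w with hM
  have hdet : M.det ≠ 0 := by
    have := v.isUnit_det w
    rw [Module.Basis.det_apply] at this
    exact this.ne_zero
  -- Leibniz expansion: some permutation contributes a nonzero product
  have : ∃ σ : Equiv.Perm (Fin n), ∏ i, M (σ i) i ≠ 0 := by
    by_contra h
    push_neg at h
    apply hdet
    rw [Matrix.det_apply]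
    exact Finset.sum_eq_zero fun σ _ => by rw [h σ, smul_zero]
  obtain ⟨σ, hσ⟩ := this
  have hentry : ∀ i, M (σ i) i ≠ 0 := fun i =>
    Finset.prod_ne_zero_iff.mp hσ i (Finset.mem_univ i)
  refine ⟨σ⁻¹, fun i => ?_⟩
  -- the key determinant computation
  have hd : IsUnit (v.det (Function.update (⇑v) i (w (σ⁻¹ i)))) := by
    rw [Module.Basis.det_apply, Module.Basis.toMatrix_update, Module.Basis.toMatrix_self,
      ← Matrix.cramer_apply, Matrix.cramer_one]
    have := hentry (σ⁻¹ i)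
    rw [hM, Module.Basis.toMatrix_apply] at this
    simpa using this
  obtain ⟨hli, hspan⟩ := (Module.Basis.is_basis_iff_det v).mpr hd
  exact ⟨Module.Basis.mk hli hspan.ge, by rw [Module.Basis.coe_mk]⟩
end

section
/- Let G be a finite connected simple graph, let T₁ and T₂ be spanning trees of G, let Λ be a linearly ordered additive commutative group, and let w be a function from the edges of G to Λ. If ∑_{e ∈ E(T₁)} w(e) < ∑_{f ∈ E(T₂)} w(f), then there exist an edge e of T₁ and an edge f of T₂ with w(e) < w(f) such that the spanning subgraph with edge set (E(T₁) ∖ {e}) ∪ {f} is again a spanning tree of G. -/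
open SimpleGraph in
private lemma reach_del_endpoint' {V : Type*} {G : SimpleGraph V} {x y v u : V} (p : G.Walk v u) :
    (G.deleteEdges {s(x,y)}).Reachable v u ∨ (G.deleteEdges {s(x,y)}).Reachable v x ∨
      (G.deleteEdges {s(x,y)}).Reachable v y := by
  induction p with
  | nil => exact Or.inl (Reachable.refl _)
  | @cons a b c h q ih =>
    by_cases he : s(a, b) = s(x, y)
    · rw [Sym2.eq_iff] at he
      rcases he with ⟨rfl, rfl⟩ | ⟨rfl, rfl⟩
      · exact Or.inr (Or.inl (Reachable.refl _))
      · exact Or.inr (Or.inr (Reachable.refl _))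
    · have hadj : (G.deleteEdges {s(x,y)}).Adj a b := by
        simp only [deleteEdges_adj, Set.mem_singleton_iff]
        exact ⟨h, he⟩
      rcases ih with h1 | h1 | h1
      · exact Or.inl (hadj.reachable.trans h1)
      · exact Or.inr (Or.inl (hadj.reachable.trans h1))
      · exact Or.inr (Or.inr (hadj.reachable.trans h1))

open SimpleGraph in
private lemma exists_cross_edge' {V : Type*} {H : SimpleGraph V} (R : V → Prop) :
    ∀ {v u : V} (p : H.Walk v u), p.IsPath → R v → ¬ R u →
    ∃ a b : V, R a ∧ ¬ R b ∧ s(a,b) ∈ p.edges ∧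
      (H.deleteEdges {s(a,b)}).Reachable v a ∧ (H.deleteEdges {s(a,b)}).Reachable b u := by
  intro v u p
  induction p with
  | nil => exact fun _ hv hu => absurd hv hu
  | @cons a b c h q ih =>
    intro hp hv hu
    have hhead : s(a, b) ∉ q.edges := by
      have := hp.edges_nodup
      rw [Walk.edges_cons] at this
      exact (List.nodup_cons.mp this).1
    by_cases hRb : R b
    · obtain ⟨a', b', h1, h2, h3, h4, h5⟩ := ih hp.of_cons hRb hu
      have hne : s(a, b) ≠ s(a', b') := fun hEq => hhead (hEq ▸ h3)
      have hadj : (H.deleteEdges {s(a',b')}).Adj a b := by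
        simp only [deleteEdges_adj, Set.mem_singleton_iff]; exact ⟨h, hne⟩
      exact ⟨a', b', h1, h2, by simp [h3], hadj.reachable.trans h4, h5⟩
    · refine ⟨a, b, hv, hRb, by simp, Reachable.refl _, ?_⟩
      refine ⟨q.transfer _ fun e he => ?_⟩
      rw [edgeSet_deleteEdges]
      exact ⟨q.edges_subset_edgeSet he, fun hEq => hhead (hEq ▸ he)⟩

open SimpleGraph in
private lemma tree_not_reach' {V : Type*} {T : SimpleGraph V} (hT : T.IsAcyclic) {x y : V}
    (hxy : s(x,y) ∈ T.edgeSet) : ¬ (T.deleteEdges {s(x,y)}).Reachable x y := by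
  have hb := (isAcyclic_iff_forall_edge_isBridge.mp hT) hxy
  rw [isBridge_iff] at hb
  exact hb

open SimpleGraph in
private lemma edgeSet_eq_of_le' {V : Type*} {T H : SimpleGraph V} (hT : T.IsAcyclic) (hle : H ≤ T)
    (hH : H.Connected) : H.edgeSet = T.edgeSet := by
  refine Set.Subset.antisymm (edgeSet_mono hle) ?_
  intro e he
  induction e with
  | _ x y =>
    by_contra hne
    apply tree_not_reach' hT he
    have hle' : H ≤ T.deleteEdges {s(x,y)} := by
      intro a b hab
      simp only [deleteEdges_adj, Set.mem_singleton_iff]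
      exact ⟨hle hab, fun hEq => hne (hEq ▸ (hab : s(a,b) ∈ H.edgeSet))⟩
    exact (hH.preconnected x y).mono hle'

open SimpleGraph in
private lemma swap_isTree' {V : Type*} {T : SimpleGraph V} (hT : T.IsTree) {a b c d : V}
    (hab : s(a,b) ∈ T.edgeSet) (hcd : c ≠ d)
    (hca : (T.deleteEdges {s(a,b)}).Reachable c a)
    (hdb : (T.deleteEdges {s(a,b)}).Reachable d b) :
    (SimpleGraph.fromEdgeSet ((T.edgeSet \ {s(a,b)}) ∪ {s(c,d)})).IsTree := by
  set D := T.deleteEdges {s(a,b)} with hD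
  set T' := SimpleGraph.fromEdgeSet ((T.edgeSet \ {s(a,b)}) ∪ {s(c,d)}) with hT'
  have hnr : ¬ D.Reachable a b := tree_not_reach' hT.IsAcyclic hab
  have hDT' : D ≤ T' := by
    intro u v huv
    rw [deleteEdges_adj, Set.mem_singleton_iff] at huv
    rw [hT', fromEdgeSet_adj]
    exact ⟨Or.inl ⟨huv.1, huv.2⟩, huv.1.ne⟩
  have hcd' : T'.Adj c d := by
    rw [hT', fromEdgeSet_adj]
    exact ⟨Or.inr rfl, hcd⟩
  constructor
  · have key : ∀ v : V, T'.Reachable v c := by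
      intro v
      obtain ⟨p⟩ := hT.isConnected.preconnected v a
      rcases reach_del_endpoint' (x := a) (y := b) p with h1 | h1 | h1
      · exact (h1.trans hca.symm).mono hDT'
      · exact (h1.trans hca.symm).mono hDT'
      · exact ((h1.trans hdb.symm).mono hDT').trans hcd'.symm.reachable
    have : Nonempty V := hT.isConnected.nonempty
    exact ⟨fun u v => (key u).trans (key v).symm⟩
  · intro u p hp
    by_cases hmem : s(c,d) ∈ p.edges
    · have hreach : (T' \ fromEdgeSet {s(c,d)}).Reachable c d :=
        (adj_and_reachable_delete_edges_iff_exists_cycle.mpr ⟨u, p, hp, hmem⟩).2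
      have hle2 : (T' \ fromEdgeSet {s(c,d)}) ≤ D := by
        intro x y hxy
        rw [sdiff_adj] at hxy
        obtain ⟨hx1, hx2⟩ := hxy
        rw [hT', fromEdgeSet_adj] at hx1
        rw [fromEdgeSet_adj] at hx2
        have hne : s(x,y) ≠ s(c,d) := fun hEq => hx2 ⟨hEq, hx1.2⟩
        rcases hx1.1 with h' | h'
        · rw [hD, deleteEdges_adj, Set.mem_singleton_iff]
          exact ⟨h'.1, h'.2⟩
        · exact absurd h' hne
      exact hnr (hca.symm.trans ((hreach.mono hle2).trans hdb))
    · have hedges : ∀ e ∈ p.edges, e ∈ T.edgeSet := by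
        intro e he
        have := p.edges_subset_edgeSet he
        rw [hT', edgeSet_fromEdgeSet] at this
        obtain ⟨h1, -⟩ := this
        rcases h1 with h' | h'
        · exact h'.1
        · exact absurd (h' ▸ he) hmem
      exact hT.IsAcyclic (p.transfer T hedges) (hp.transfer hedges)

open SimpleGraph in
private lemma exchange' {V : Type*} {T₁ T₂ : SimpleGraph V} (h₁ : T₁.IsTree) (h₂ : T₂.IsTree)
    {e : Sym2 V} (he : e ∈ T₁.edgeSet) (hne : e ∉ T₂.edgeSet) :
    ∃ f ∈ T₂.edgeSet, f ∉ T₁.edgeSet ∧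
      (SimpleGraph.fromEdgeSet ((T₁.edgeSet \ {e}) ∪ {f})).IsTree ∧
      (SimpleGraph.fromEdgeSet ((T₂.edgeSet \ {f}) ∪ {e})).IsTree := by
  induction e with
  | _ x y =>
    classical
    have hxy : x ≠ y := (T₁.mem_edgeSet.mp he).ne
    have hRx : (T₁.deleteEdges {s(x,y)}).Reachable x x := Reachable.refl _
    have hRy : ¬ (T₁.deleteEdges {s(x,y)}).Reachable y x :=
      fun h => tree_not_reach' h₁.IsAcyclic he h.symm
    obtain ⟨p₀⟩ := h₂.isConnected.preconnected x y
    obtain ⟨a, b, hRa, hRb, hfp, hxa, hby⟩ :=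
      exists_cross_edge' (fun v => (T₁.deleteEdges {s(x,y)}).Reachable v x)
        (p₀.toPath : T₂.Walk x y) p₀.toPath.2 hRx hRy
    have hfT₂ : s(a,b) ∈ T₂.edgeSet := (p₀.toPath : T₂.Walk x y).edges_subset_edgeSet hfp
    have hab : a ≠ b := (T₂.mem_edgeSet.mp hfT₂).ne
    have hfT₁ : s(a,b) ∉ T₁.edgeSet := by
      intro hmem
      have hne2 : s(a,b) ≠ s(x,y) := fun hEq => hne (hEq ▸ hfT₂)
      apply hRb
      have hadj : (T₁.deleteEdges {s(x,y)}).Adj a b := by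
        simp only [deleteEdges_adj, Set.mem_singleton_iff]
        exact ⟨hmem, hne2⟩
      exact hadj.symm.reachable.trans hRa
    have hbY : (T₁.deleteEdges {s(x,y)}).Reachable b y := by
      obtain ⟨q⟩ := h₁.isConnected.preconnected b x
      rcases reach_del_endpoint' (x := x) (y := y) q with h' | h' | h'
      · exact absurd h' hRb
      · exact absurd h' hRb
      · exact h'
    refine ⟨s(a,b), hfT₂, hfT₁, ?_, ?_⟩
    · exact swap_isTree' h₁ he hab hRa hbY
    · exact swap_isTree' h₂ hfT₂ hxy hxa hby.symm

open SimpleGraph in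
private lemma no_tree_del' {V : Type*} {T : SimpleGraph V} (hT : T.IsAcyclic) {e : Sym2 V}
    (he : e ∈ T.edgeSet) : ¬ (SimpleGraph.fromEdgeSet (T.edgeSet \ {e})).IsTree := by
  induction e with
  | _ x y =>
    intro htree
    apply tree_not_reach' hT he
    have hle : SimpleGraph.fromEdgeSet (T.edgeSet \ {s(x,y)}) ≤ T.deleteEdges {s(x,y)} := by
      intro a b hab
      rw [fromEdgeSet_adj] at hab
      rw [deleteEdges_adj, Set.mem_singleton_iff]
      exact ⟨hab.1.1, hab.1.2⟩
    exact (htree.isConnected.preconnected x y).mono hle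

open SimpleGraph in
private lemma aux_swap' {V : Type*} [Finite V] {Λ : Type*} [AddCommGroup Λ] [LinearOrder Λ] [IsOrderedAddMonoid Λ]
    (w : Sym2 V → Λ) :
    ∀ n : ℕ, ∀ T₁ T₂ : SimpleGraph V, T₁.IsTree → T₂.IsTree →
      (T₂.edgeSet \ T₁.edgeSet).toFinite.toFinset.card = n →
      ∑ e ∈ T₁.edgeSet.toFinite.toFinset, w e < ∑ f ∈ T₂.edgeSet.toFinite.toFinset, w f →
      ∃ e ∈ T₁.edgeSet, ∃ f ∈ T₂.edgeSet, w e < w f ∧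
        (SimpleGraph.fromEdgeSet ((T₁.edgeSet \ {e}) ∪ {f})).IsTree := by
  intro n
  induction n using Nat.strong_induction_on with
  | _ n ih =>
  intro T₁ T₂ h₁ h₂ hcard hlt
  classical
  by_cases hsub : T₁.edgeSet ⊆ T₂.edgeSet
  · have heq : T₁.edgeSet = T₂.edgeSet :=
      edgeSet_eq_of_le' h₂.IsAcyclic (edgeSet_subset_edgeSet.mp hsub) h₁.isConnected
    have : T₁.edgeSet.toFinite.toFinset = T₂.edgeSet.toFinite.toFinset := by
      ext g; simp [Set.Finite.mem_toFinset, heq]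
    rw [this] at hlt
    exact absurd hlt (lt_irrefl _)
  · obtain ⟨e, heT₁, heT₂⟩ := Set.not_subset.mp hsub
    obtain ⟨f, hfT₂, hfT₁, tree1, tree2⟩ := exchange' h₁ h₂ heT₁ heT₂
    by_cases hw : w e < w f
    · exact ⟨e, heT₁, f, hfT₂, hw, tree1⟩
    · push_neg at hw
      set T₂' := SimpleGraph.fromEdgeSet ((T₂.edgeSet \ {f}) ∪ {e}) with hT₂'
      have hE : T₂'.edgeSet = (T₂.edgeSet \ {f}) ∪ {e} := by
        rw [hT₂', edgeSet_fromEdgeSet, sdiff_eq_left]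
        rw [Set.disjoint_left]
        rintro g (⟨hg, -⟩ | hg)
        · exact T₂.not_isDiag_of_mem_edgeSet hg
        · rw [Set.mem_singleton_iff] at hg
          exact hg ▸ T₁.not_isDiag_of_mem_edgeSet heT₁
      have hset : T₂'.edgeSet \ T₁.edgeSet = (T₂.edgeSet \ T₁.edgeSet) \ {f} := by
        rw [hE]; ext g
        constructor
        · rintro ⟨⟨hg1, hg2⟩ | hg, hg3⟩
          · exact ⟨⟨hg1, hg3⟩, hg2⟩
          · rw [Set.mem_singleton_iff] at hg
            exact absurd (hg ▸ heT₁) hg3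
        · rintro ⟨⟨hg1, hg3⟩, hg2⟩
          exact ⟨Or.inl ⟨hg1, hg2⟩, hg3⟩
      have hcard' : (T₂'.edgeSet \ T₁.edgeSet).toFinite.toFinset.card < n := by
        rw [← hcard]
        apply Finset.card_lt_card
        rw [Set.Finite.toFinset_ssubset_toFinset, hset]
        exact Set.sdiff_singleton_ssubset.mpr ⟨hfT₂, hfT₁⟩
      have hsum2 : ∑ g ∈ T₂.edgeSet.toFinite.toFinset, w g ≤
          ∑ g ∈ T₂'.edgeSet.toFinite.toFinset, w g := by
        have hT2' : T₂'.edgeSet.toFinite.toFinset =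
            insert e ((T₂.edgeSet.toFinite.toFinset).erase f) := by
          ext g
          simp only [Set.Finite.mem_toFinset, hE, Finset.mem_insert, Finset.mem_erase,
            Set.mem_union, Set.mem_diff, Set.mem_singleton_iff, Set.Finite.mem_toFinset]
          tauto
        rw [hT2', Finset.sum_insert (by simp [Set.Finite.mem_toFinset, heT₂])]
        conv_lhs => rw [← Finset.add_sum_erase _ w
          (show f ∈ T₂.edgeSet.toFinite.toFinset by simp [Set.Finite.mem_toFinset, hfT₂])]
        exact add_le_add_left hw _
      obtain ⟨e', he', f', hf', hwlt, htree⟩ :=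
        ih _ hcard' T₁ T₂' h₁ tree2 rfl (lt_of_lt_of_le hlt hsum2)
      refine ⟨e', he', f', ?_, hwlt, htree⟩
      have hf'' := hE ▸ hf'
      rcases hf'' with ⟨h1, -⟩ | h1
      · exact h1
      · exfalso
        rw [Set.mem_singleton_iff] at h1; subst h1
        by_cases hee : e' = f'
        · exact absurd hwlt (hee ▸ lt_irrefl _)
        · have hrw : (T₁.edgeSet \ {e'}) ∪ {f'} = T₁.edgeSet \ {e'} := by
            rw [Set.union_singleton, Set.insert_eq_self]
            exact ⟨heT₁, fun h => hee (Set.mem_singleton_iff.mp h).symm⟩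
          rw [hrw] at htree
          exact no_tree_del' h₁.IsAcyclic he' htree

/-- **Norm-decreasing edge swap (combinatorial Factorization Lemma).**
If `T₁` and `T₂` are spanning trees of a finite connected simple graph `G` and the
total `w`-weight of `T₁` is smaller than that of `T₂`, then there are edges
`e ∈ T₁` and `f ∈ T₂` with `w e < w f` such that exchanging `e` for `f` in `T₁`
again gives a spanning tree of `G`. -/
theorem exists_norm_decreasing_swap {V : Type*} [Fintype V]
    (G : SimpleGraph V) (hG : G.Connected)
    (T₁ T₂ : SimpleGraph V) (hT₁G : T₁ ≤ G) (hT₂G : T₂ ≤ G)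
    (hT₁ : T₁.IsTree) (hT₂ : T₂.IsTree)
    {Λ : Type*} [AddCommGroup Λ] [LinearOrder Λ] [IsOrderedAddMonoid Λ] (w : Sym2 V → Λ)
    [Fintype T₁.edgeSet] [Fintype T₂.edgeSet]
    (hlt : ∑ e : T₁.edgeSet, w e < ∑ f : T₂.edgeSet, w f) :
    ∃ e ∈ T₁.edgeSet, ∃ f ∈ T₂.edgeSet, w e < w f ∧
      (SimpleGraph.fromEdgeSet ((T₁.edgeSet \ {e}) ∪ {f})).IsTree := by
  classical
  have conv : ∀ (T : SimpleGraph V) (inst : Fintype T.edgeSet),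
      (∑ e : T.edgeSet, w e) = ∑ e ∈ T.edgeSet.toFinite.toFinset, w e := by
    intro T inst
    rw [← Finset.sum_coe_sort (T.edgeSet.toFinite.toFinset) w]
    exact Fintype.sum_equiv
      (Equiv.subtypeEquivRight fun x => (Set.Finite.mem_toFinset _).symm) _ _ fun _ => rfl
  exact aux_swap' w _ T₁ T₂ hT₁ hT₂ rfl
    (by rw [← conv T₁ _, ← conv T₂ _]; exact hlt)
end

section
/- For all finite subsets A and B of H, writing Aᶜ = H ∖ A, one has cut(A ∩ B) + cut(A ∪ B) + cut(Aᶜ ∩ B) + cut(Aᶜ ∪ B) ≤ 2·cut(A) + 2·cut(B). -/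
open Finset

/-- `cut d A = ∑_{x ∈ A} ∑_{y ∉ A} d x y`, the total weight of pairs
separated by the partition `{A, H ∖ A}`. -/
def cut {H : Type*} [Fintype H] [DecidableEq H] {Λ : Type*}
    [AddCommGroup Λ] [LinearOrder Λ] [IsOrderedAddMonoid Λ] (d : H → H → Λ) (A : Finset H) : Λ :=
  ∑ x ∈ A, ∑ y ∈ Aᶜ, d x y

lemma cut_eq {H : Type*} [Fintype H] [DecidableEq H] {Λ : Type*}
    [AddCommGroup Λ] [LinearOrder Λ] [IsOrderedAddMonoid Λ] (d : H → H → Λ) (A : Finset H) :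
    cut d A = ∑ x : H, ∑ y : H, if x ∈ A ∧ y ∉ A then d x y else 0 := by
  rw [cut]
  symm
  calc ∑ x : H, ∑ y : H, (if x ∈ A ∧ y ∉ A then d x y else 0)
      = ∑ x : H, if x ∈ A then ∑ y ∈ Aᶜ, d x y else 0 := by
        refine Finset.sum_congr rfl fun x _ => ?_
        by_cases hx : x ∈ A
        · simp only [hx, true_and, if_true]
          rw [show (fun y => if y ∉ A then d x y else 0)
              = fun y => if y ∈ Aᶜ then d x y else 0 from
            funext fun y => by simp [Finset.mem_compl]]
          rw [Finset.sum_ite_mem, Finset.univ_inter]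
        · simp [hx]
    _ = ∑ x ∈ A, ∑ y ∈ Aᶜ, d x y := by rw [Finset.sum_ite_mem, Finset.univ_inter]

lemma cut_compl {H : Type*} [Fintype H] [DecidableEq H] {Λ : Type*}
    [AddCommGroup Λ] [LinearOrder Λ] [IsOrderedAddMonoid Λ] (d : H → H → Λ)
    (hsymm : ∀ x y, d x y = d y x) (A : Finset H) :
    cut d Aᶜ = cut d A := by
  rw [cut, cut, compl_compl, Finset.sum_comm]
  exact Finset.sum_congr rfl fun x _ => Finset.sum_congr rfl fun y _ => hsymm y x

lemma cut_submodular {H : Type*} [Fintype H] [DecidableEq H] {Λ : Type*}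
    [AddCommGroup Λ] [LinearOrder Λ] [IsOrderedAddMonoid Λ] (d : H → H → Λ)
    (hnonneg : ∀ x y, 0 ≤ d x y) (A B : Finset H) :
    cut d (A ∩ B) + cut d (A ∪ B) ≤ cut d A + cut d B := by
  simp only [cut_eq, ← Finset.sum_add_distrib]
  refine Finset.sum_le_sum fun x _ => Finset.sum_le_sum fun y _ => ?_
  by_cases hxA : x ∈ A <;> by_cases hxB : x ∈ B <;>
    by_cases hyA : y ∈ A <;> by_cases hyB : y ∈ B <;>
    simp [Finset.mem_inter, Finset.mem_union, hxA, hxB, hyA, hyB, hnonneg,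
      add_nonneg (hnonneg x y) (hnonneg x y)]

/-- The doubled submodularity inequality:
`cut (A ∩ B) + cut (A ∪ B) + cut (Aᶜ ∩ B) + cut (Aᶜ ∪ B) ≤ 2·cut A + 2·cut B`. -/
theorem cut_four_term_ineq {H : Type*} [Fintype H] [DecidableEq H] {Λ : Type*}
    [AddCommGroup Λ] [LinearOrder Λ] [IsOrderedAddMonoid Λ] (d : H → H → Λ)
    (hsymm : ∀ x y, d x y = d y x) (hnonneg : ∀ x y, 0 ≤ d x y)
    (A B : Finset H) :
    cut d (A ∩ B) + cut d (A ∪ B) + cut d (Aᶜ ∩ B) + cut d (Aᶜ ∪ B) ≤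
      2 • cut d A + 2 • cut d B := by
  have h1 := cut_submodular d hnonneg A B
  have h2 := cut_submodular d hnonneg Aᶜ B
  rw [cut_compl d hsymm] at h2
  calc cut d (A ∩ B) + cut d (A ∪ B) + cut d (Aᶜ ∩ B) + cut d (Aᶜ ∪ B)
      = (cut d (A ∩ B) + cut d (A ∪ B)) + (cut d (Aᶜ ∩ B) + cut d (Aᶜ ∪ B)) := by abel
    _ ≤ (cut d A + cut d B) + (cut d A + cut d B) := add_le_add h1 h2
    _ = 2 • cut d A + 2 • cut d B := by abel
end

section
/- Let (M, m) be a maximally reductive pair and A ⊆ H. Suppose m ∈ A ∩ M, a ∈ A ∖ M, σ(a) ∈ M ∖ A, σ(m) ∉ A ∪ M, and |a| − cut(A) > 0. Then (A ∪ M, m) is a reductive pair or ((H ∖ A) ∩ M, σ(a)) is a reductive pair; that is, |m| − cut(A ∪ M) > 0 or |a| − cut((H ∖ A) ∩ M) > 0. -/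
open Finset

/-- `(X, x)` is a reductive pair if `x ∈ X`, `σ x ∉ X` and `|x| - cut X > 0`,
where `|x| = cut {x}`. -/
def IsReductivePair {H : Type*} [Fintype H] [DecidableEq H] {Λ : Type*}
    [AddCommGroup Λ] [LinearOrder Λ] [IsOrderedAddMonoid Λ] (d : H → H → Λ) (σ : H → H)
    (X : Finset H) (x : H) : Prop :=
  x ∈ X ∧ σ x ∉ X ∧ 0 < cut d {x} - cut d X

/-- `X` is a side of a reductive ideal edge if some `x` with `x` and `σ x` on
opposite sides of the partition `{X, H ∖ X}` satisfies `|x| - cut X > 0`. -/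
def IsSideOfReductiveIdealEdge {H : Type*} [Fintype H] [DecidableEq H] {Λ : Type*}
    [AddCommGroup Λ] [LinearOrder Λ] [IsOrderedAddMonoid Λ] (d : H → H → Λ) (σ : H → H)
    (X : Finset H) : Prop :=
  ∃ x : H, ((x ∈ X ∧ σ x ∉ X) ∨ (x ∉ X ∧ σ x ∈ X)) ∧ 0 < cut d {x} - cut d X

/-- `(M, m)` is maximally reductive: it is a reductive pair whose reduction
`|m| - cut M` is at least that of any reductive pair. -/
def IsMaximallyReductivePair {H : Type*} [Fintype H] [DecidableEq H] {Λ : Type*}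
    [AddCommGroup Λ] [LinearOrder Λ] [IsOrderedAddMonoid Λ] (d : H → H → Λ) (σ : H → H)
    (M : Finset H) (m : H) : Prop :=
  IsReductivePair d σ M m ∧
    ∀ X x, IsReductivePair d σ X x → cut d {x} - cut d X ≤ cut d {m} - cut d M

open Finset

private def wsum {H : Type*} [Fintype H] [DecidableEq H] {Λ : Type*}
    [AddCommGroup Λ] [LinearOrder Λ] [IsOrderedAddMonoid Λ] (d : H → H → Λ) (X Y : Finset H) : Λ :=
  ∑ x ∈ X, ∑ y ∈ Y, d x y

private lemma cut_eq_wsum {H : Type*} [Fintype H] [DecidableEq H] {Λ : Type*}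
    [AddCommGroup Λ] [LinearOrder Λ] [IsOrderedAddMonoid Λ] (d : H → H → Λ) (A : Finset H) :
    cut d A = wsum d A Aᶜ := rfl

private lemma wsum_comm {H : Type*} [Fintype H] [DecidableEq H] {Λ : Type*}
    [AddCommGroup Λ] [LinearOrder Λ] [IsOrderedAddMonoid Λ] (d : H → H → Λ) (hsymm : ∀ x y, d x y = d y x)
    (X Y : Finset H) : wsum d X Y = wsum d Y X := by
  unfold wsum
  rw [Finset.sum_comm]
  exact Finset.sum_congr rfl fun y _ => Finset.sum_congr rfl fun x _ => hsymm x y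

private lemma wsum_union_left {H : Type*} [Fintype H] [DecidableEq H] {Λ : Type*}
    [AddCommGroup Λ] [LinearOrder Λ] [IsOrderedAddMonoid Λ] (d : H → H → Λ) {X Y : Finset H} (Z : Finset H)
    (h : Disjoint X Y) : wsum d (X ∪ Y) Z = wsum d X Z + wsum d Y Z :=
  Finset.sum_union h

private lemma wsum_union_right {H : Type*} [Fintype H] [DecidableEq H] {Λ : Type*}
    [AddCommGroup Λ] [LinearOrder Λ] [IsOrderedAddMonoid Λ] (d : H → H → Λ) (X : Finset H) {Y Z : Finset H}
    (h : Disjoint Y Z) : wsum d X (Y ∪ Z) = wsum d X Y + wsum d X Z := by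
  unfold wsum
  simp [Finset.sum_union h, Finset.sum_add_distrib]

private lemma wsum_nonneg {H : Type*} [Fintype H] [DecidableEq H] {Λ : Type*}
    [AddCommGroup Λ] [LinearOrder Λ] [IsOrderedAddMonoid Λ] (d : H → H → Λ) (hnonneg : ∀ x y, 0 ≤ d x y)
    (X Y : Finset H) : 0 ≤ wsum d X Y :=
  Finset.sum_nonneg fun x _ => Finset.sum_nonneg fun y _ => hnonneg x y

set_option maxHeartbeats 2000000 in
/-- Case of the Key Lemma (all four sectors occupied): if `m ∈ A ∩ M`,
`a ∈ A ∖ M`, `σ a ∈ M ∖ A`, `σ m ∉ A ∪ M` and `|a| - cut A > 0`, then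
`(A ∪ M, m)` is a reductive pair or `((H ∖ A) ∩ M, σ a)` is a reductive pair;
that is, `|m| - cut (A ∪ M) > 0` or `|a| - cut ((H ∖ A) ∩ M) > 0`. -/
theorem key_lemma_case_four_sectors {H : Type*} [Fintype H] [DecidableEq H] {Λ : Type*}
    [AddCommGroup Λ] [LinearOrder Λ] [IsOrderedAddMonoid Λ] (d : H → H → Λ)
    (hsymm : ∀ x y, d x y = d y x) (hnonneg : ∀ x y, 0 ≤ d x y)
    (σ : H → H) (hinv : ∀ x, σ (σ x) = x) (hfix : ∀ x, σ x ≠ x)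
    (hσnorm : ∀ x, cut d {σ x} = cut d {x})
    (M : Finset H) (m : H) (hMm : IsMaximallyReductivePair d σ M m)
    (A : Finset H) (a : H)
    (hmAM : m ∈ A ∩ M) (haA : a ∈ A \ M) (hsa : σ a ∈ M \ A) (hsm : σ m ∉ A ∪ M)
    (ha : 0 < cut d {a} - cut d A) :
    (IsReductivePair d σ (A ∪ M) m ∧ 0 < cut d {m} - cut d (A ∪ M)) ∨
      (IsReductivePair d σ (Aᶜ ∩ M) (σ a) ∧ 0 < cut d {a} - cut d (Aᶜ ∩ M)) := by
  classical
  obtain ⟨hmA, hmM⟩ := Finset.mem_inter.mp hmAM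
  obtain ⟨haA', haM⟩ := Finset.mem_sdiff.mp haA
  obtain ⟨hsaM, hsaA⟩ := Finset.mem_sdiff.mp hsa
  have hsmA : σ m ∉ A := fun h => hsm (Finset.mem_union_left _ h)
  suffices hkey : 0 < cut d {m} - cut d (A ∪ M) ∨ 0 < cut d {a} - cut d (Aᶜ ∩ M) by
    rcases hkey with h | h
    · exact Or.inl ⟨⟨Finset.mem_union_left _ hmA, hsm, h⟩, h⟩
    · refine Or.inr ⟨⟨?_, ?_, ?_⟩, h⟩
      · exact Finset.mem_inter.mpr ⟨Finset.mem_compl.mpr hsaA, hsaM⟩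
      · rw [hinv]
        simp [Finset.mem_inter, Finset.mem_compl, haA']
      · rw [hσnorm]; exact h
  by_contra hcon
  push_neg at hcon
  obtain ⟨h1, h2⟩ := hcon
  -- set decompositions
  have hA : A = (A ∩ M) ∪ (A \ M) := by ext x; simp; tauto
  have hAc : Aᶜ = (Aᶜ ∩ M) ∪ (A ∪ M)ᶜ := by ext x; simp; tauto
  have hM2 : M = (A ∩ M) ∪ (Aᶜ ∩ M) := by ext x; simp; tauto
  have hMc : Mᶜ = (A \ M) ∪ (A ∪ M)ᶜ := by ext x; simp; tauto
  have hU : A ∪ M = ((A ∩ M) ∪ (A \ M)) ∪ (Aᶜ ∩ M) := by ext x; simp; tauto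
  have hIc : (A ∩ M)ᶜ = (A \ M) ∪ ((Aᶜ ∩ M) ∪ (A ∪ M)ᶜ) := by ext x; simp; tauto
  have hQc : (A \ M)ᶜ = (A ∩ M) ∪ ((Aᶜ ∩ M) ∪ (A ∪ M)ᶜ) := by ext x; simp; tauto
  have hRc : (Aᶜ ∩ M)ᶜ = (A ∩ M) ∪ ((A \ M) ∪ (A ∪ M)ᶜ) := by ext x; simp; tauto
  -- disjointness
  have dPQ : Disjoint (A ∩ M) (A \ M) := by
    rw [Finset.disjoint_left]; intro x hx hy; simp at hx hy; tauto
  have dPR : Disjoint (A ∩ M) (Aᶜ ∩ M) := by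
    rw [Finset.disjoint_left]; intro x hx hy; simp at hx hy; tauto
  have dPS : Disjoint (A ∩ M) ((A ∪ M)ᶜ) := by
    rw [Finset.disjoint_left]; intro x hx hy; simp at hx hy; tauto
  have dQR : Disjoint (A \ M) (Aᶜ ∩ M) := by
    rw [Finset.disjoint_left]; intro x hx hy; simp at hx hy; tauto
  have dQS : Disjoint (A \ M) ((A ∪ M)ᶜ) := by
    rw [Finset.disjoint_left]; intro x hx hy; simp at hx hy; tauto
  have dRS : Disjoint (Aᶜ ∩ M) ((A ∪ M)ᶜ) := by
    rw [Finset.disjoint_left]; intro x hx hy; simp at hx hy; tauto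
  -- cut expansions into atoms
  have eA : cut d A = wsum d (A ∩ M) (Aᶜ ∩ M) + wsum d (A ∩ M) (A ∪ M)ᶜ +
      wsum d (A \ M) (Aᶜ ∩ M) + wsum d (A \ M) (A ∪ M)ᶜ := by
    have e : wsum d A Aᶜ = wsum d ((A ∩ M) ∪ (A \ M)) ((Aᶜ ∩ M) ∪ (A ∪ M)ᶜ) := by
      rw [← hA, ← hAc]
    rw [cut_eq_wsum, e, wsum_union_left d _ dPQ, wsum_union_right d _ dRS,
      wsum_union_right d _ dRS]
    abel
  have eM : cut d M = wsum d (A ∩ M) (A \ M) + wsum d (A ∩ M) (A ∪ M)ᶜ +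
      wsum d (A \ M) (Aᶜ ∩ M) + wsum d (Aᶜ ∩ M) (A ∪ M)ᶜ := by
    have e : wsum d M Mᶜ = wsum d ((A ∩ M) ∪ (Aᶜ ∩ M)) ((A \ M) ∪ (A ∪ M)ᶜ) := by
      rw [← hM2, ← hMc]
    rw [cut_eq_wsum, e, wsum_union_left d _ dPR, wsum_union_right d _ dQS,
      wsum_union_right d _ dQS, wsum_comm d hsymm (Aᶜ ∩ M) (A \ M)]
    abel
  have eU : cut d (A ∪ M) = wsum d (A ∩ M) (A ∪ M)ᶜ + wsum d (A \ M) (A ∪ M)ᶜ +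
      wsum d (Aᶜ ∩ M) (A ∪ M)ᶜ := by
    have e : wsum d (A ∪ M) (A ∪ M)ᶜ =
        wsum d (((A ∩ M) ∪ (A \ M)) ∪ (Aᶜ ∩ M)) (A ∪ M)ᶜ := by rw [← hU]
    rw [cut_eq_wsum, e, wsum_union_left d _ (Finset.disjoint_union_left.mpr ⟨dPR, dQR⟩),
      wsum_union_left d _ dPQ]
  have eI : cut d (A ∩ M) = wsum d (A ∩ M) (A \ M) + wsum d (A ∩ M) (Aᶜ ∩ M) +
      wsum d (A ∩ M) (A ∪ M)ᶜ := by
    have e : wsum d (A ∩ M) (A ∩ M)ᶜ =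
        wsum d (A ∩ M) ((A \ M) ∪ ((Aᶜ ∩ M) ∪ (A ∪ M)ᶜ)) := by rw [← hIc]
    rw [cut_eq_wsum, e, wsum_union_right d _ (Finset.disjoint_union_right.mpr ⟨dQR, dQS⟩),
      wsum_union_right d _ dRS]
    abel
  have eQ : cut d (A \ M) = wsum d (A ∩ M) (A \ M) + wsum d (A \ M) (Aᶜ ∩ M) +
      wsum d (A \ M) (A ∪ M)ᶜ := by
    have e : wsum d (A \ M) (A \ M)ᶜ =
        wsum d (A \ M) ((A ∩ M) ∪ ((Aᶜ ∩ M) ∪ (A ∪ M)ᶜ)) := by rw [← hQc]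
    rw [cut_eq_wsum, e, wsum_union_right d _ (Finset.disjoint_union_right.mpr ⟨dPR, dPS⟩),
      wsum_union_right d _ dRS, wsum_comm d hsymm (A \ M) (A ∩ M)]
    abel
  have eR : cut d (Aᶜ ∩ M) = wsum d (A ∩ M) (Aᶜ ∩ M) + wsum d (A \ M) (Aᶜ ∩ M) +
      wsum d (Aᶜ ∩ M) (A ∪ M)ᶜ := by
    have e : wsum d (Aᶜ ∩ M) (Aᶜ ∩ M)ᶜ =
        wsum d (Aᶜ ∩ M) ((A ∩ M) ∪ ((A \ M) ∪ (A ∪ M)ᶜ)) := by rw [← hRc]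
    rw [cut_eq_wsum, e, wsum_union_right d _ (Finset.disjoint_union_right.mpr ⟨dPQ, dPS⟩),
      wsum_union_right d _ dQS, wsum_comm d hsymm (Aᶜ ∩ M) (A ∩ M),
      wsum_comm d hsymm (Aᶜ ∩ M) (A \ M)]
    abel
  -- maximality implications
  have hsaQ : σ a ∉ A \ M := fun h => hsaA (Finset.mem_sdiff.mp h).1
  have hsmP : σ m ∉ A ∩ M := fun h => hsmA (Finset.mem_inter.mp h).1
  have keyA : 0 < cut d {a} - cut d (A \ M) →
      cut d {a} - cut d (A \ M) ≤ cut d {m} - cut d M :=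
    fun h => hMm.2 _ a ⟨haA, hsaQ, h⟩
  have keyB : 0 < cut d {m} - cut d (A ∩ M) →
      cut d {m} - cut d (A ∩ M) ≤ cut d {m} - cut d M :=
    fun h => hMm.2 _ m ⟨hmAM, hsmP, h⟩
  have hMpos : 0 < cut d {m} - cut d M := hMm.1.2.2
  -- atomize everything
  rw [eA] at ha
  rw [eM] at hMpos
  rw [eU] at h1
  rw [eR] at h2
  rw [eQ, eM] at keyA
  rw [eI, eM] at keyB
  set pq := wsum d (A ∩ M) (A \ M) with hpq
  set pr := wsum d (A ∩ M) (Aᶜ ∩ M) with hpr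
  set ps := wsum d (A ∩ M) (A ∪ M)ᶜ with hps
  set qr := wsum d (A \ M) (Aᶜ ∩ M) with hqr
  set qs := wsum d (A \ M) (A ∪ M)ᶜ with hqs
  set rs := wsum d (Aᶜ ∩ M) (A ∪ M)ᶜ with hrs
  set na := cut d {a} with hna
  set ma := cut d {m} with hma
  have N3 : (0 : Λ) ≤ ps := by rw [hps]; exact wsum_nonneg d hnonneg _ _
  have N4 : (0 : Λ) ≤ qr := by rw [hqr]; exact wsum_nonneg d hnonneg _ _
  clear_value pq pr ps qr qs rs na ma
  have N5 : (0 : Λ) ≤ -(na - (pr + qr + rs)) := neg_nonneg.mpr h2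
  have N6 : (0 : Λ) ≤ -(ma - (ps + qs + rs)) := neg_nonneg.mpr h1
  -- sum of the two intermediate reductions is positive
  have hsum : 0 < (na - (pq + qr + qs)) + (ma - (pq + pr + ps)) := by
    have hrest : (0 : Λ) ≤ ps + ps + (qr + qr) + -(na - (pr + qr + rs)) +
        -(ma - (ps + qs + rs)) :=
      add_nonneg (add_nonneg (add_nonneg (add_nonneg N3 N3) (add_nonneg N4 N4)) N5) N6
    have hstr : (0 : Λ) < (na - (pr + ps + qr + qs)) + (na - (pr + ps + qr + qs)) +
        ((ma - (pq + ps + qr + rs)) + (ma - (pq + ps + qr + rs))) :=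
      add_pos (add_pos ha ha) (add_pos hMpos hMpos)
    exact (lt_of_lt_of_le hstr (le_add_of_nonneg_right hrest)).trans_eq (by abel)
  rcases lt_or_ge 0 (na - (pq + qr + qs)) with hr1 | hr1
  · -- (A \ M, a) is reductive
    have NG1 : (0 : Λ) ≤ (ma - (pq + ps + qr + rs)) - (na - (pq + qr + qs)) :=
      sub_nonneg.mpr (keyA hr1)
    have hr2 : 0 < ma - (pq + pr + ps) := by
      have hrest : (0 : Λ) ≤ ((ma - (pq + ps + qr + rs)) - (na - (pq + qr + qs))) +
          -(na - (pr + qr + rs)) + -(ma - (ps + qs + rs)) + (ps + ps) + (qr + qr) :=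
        add_nonneg (add_nonneg (add_nonneg (add_nonneg NG1 N5) N6)
          (add_nonneg N3 N3)) (add_nonneg N4 N4)
      have hstr : (0 : Λ) < (na - (pr + ps + qr + qs)) + (na - (pr + ps + qr + qs)) +
          (ma - (pq + ps + qr + rs)) :=
        add_pos (add_pos ha ha) hMpos
      exact (lt_of_lt_of_le hstr (le_add_of_nonneg_right hrest)).trans_eq (by abel)
    have NG2 : (0 : Λ) ≤ (ma - (pq + ps + qr + rs)) - (ma - (pq + pr + ps)) :=
      sub_nonneg.mpr (keyB hr2)
    have hrest : (0 : Λ) ≤ ((ma - (pq + ps + qr + rs)) - (na - (pq + qr + qs))) +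
        ((ma - (pq + ps + qr + rs)) - (ma - (pq + pr + ps))) + (ps + ps) + (qr + qr) +
        -(na - (pr + qr + rs)) + -(ma - (ps + qs + rs)) :=
      add_nonneg (add_nonneg (add_nonneg (add_nonneg (add_nonneg NG1 NG2)
        (add_nonneg N3 N3)) (add_nonneg N4 N4)) N5) N6
    have hstr : (0 : Λ) < (na - (pr + ps + qr + qs)) + (na - (pr + ps + qr + qs)) :=
      add_pos ha ha
    have hfin : (0 : Λ) < 0 :=
      (lt_of_lt_of_le hstr (le_add_of_nonneg_right hrest)).trans_eq (by abel)
    exact absurd hfin (lt_irrefl 0)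
  · -- then (A ∩ M, m) is reductive
    have hr2 : 0 < ma - (pq + pr + ps) := by
      have h' := add_le_add_left hr1 (ma - (pq + pr + ps))
      rw [zero_add] at h'
      exact lt_of_lt_of_le hsum h'
    have NG2 : (0 : Λ) ≤ (ma - (pq + ps + qr + rs)) - (ma - (pq + pr + ps)) :=
      sub_nonneg.mpr (keyB hr2)
    have hr1' : 0 < na - (pq + qr + qs) := by
      have hrest : (0 : Λ) ≤ (ps + ps) + (qr + qr) + -(na - (pr + qr + rs)) +
          -(ma - (ps + qs + rs)) +
          ((ma - (pq + ps + qr + rs)) - (ma - (pq + pr + ps))) :=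
        add_nonneg (add_nonneg (add_nonneg (add_nonneg (add_nonneg N3 N3)
          (add_nonneg N4 N4)) N5) N6) NG2
      have hstr : (0 : Λ) < (na - (pr + ps + qr + qs)) + (na - (pr + ps + qr + qs)) +
          (ma - (pq + ps + qr + rs)) :=
        add_pos (add_pos ha ha) hMpos
      exact (lt_of_lt_of_le hstr (le_add_of_nonneg_right hrest)).trans_eq (by abel)
    exact absurd hr1' (not_lt.mpr hr1)
end

section
/- Let α be a type with distinct elements i ≠ j, and let u be an element of the free group on α. If the element (of i) * u * (of j) * u⁻¹ is conjugate to an element whose reduced word has length at most 2, then there exist integers k and m with u = (of i)^k * (of j)^m; consequently u * (of j) * u⁻¹ = (of i)^k * (of j) * (of i)^(−k). -/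
namespace FGConjAux

open FreeGroup List

variable {α : Type*} [DecidableEq α]

/-- the no-cancellation relation -/
def R : (α × Bool) → (α × Bool) → Prop := fun p q => ¬(p.1 = q.1 ∧ p.2 = !q.2)

/-- reduced words -/
def Rd (L : List (α × Bool)) : Prop := List.IsChain R L

lemma R_iff (p q : α × Bool) : R p q ↔ q ≠ (p.1, !p.2) := by
  obtain ⟨x, b⟩ := p; obtain ⟨y, c⟩ := q
  simp only [R, Prod.mk.injEq, ne_eq, not_iff_not]
  cases b <;> cases c <;> simp [eq_comm]

lemma R_iff' (p q : α × Bool) : R p q ↔ p ≠ (q.1, !q.2) := by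
  rw [R_iff]
  obtain ⟨x, b⟩ := p; obtain ⟨y, c⟩ := q
  simp only [ne_eq, Prod.mk.injEq, not_iff_not]
  cases b <;> cases c <;> simp [eq_comm]

lemma rd_reduce : ∀ L : List (α × Bool), Rd (reduce L)
  | [] => List.isChain_nil
  | x :: L => by
    have ih := rd_reduce L
    rw [reduce.cons]
    cases h : reduce L with
    | nil => simp [Rd]
    | cons hd tl =>
      rw [h] at ih
      by_cases hc : x.1 = hd.1 ∧ x.2 = !hd.2
      · simpa [hc, Rd] using ih.tail
      · simp only [if_neg hc]
        exact List.isChain_cons_cons.2 ⟨hc, ih⟩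

lemma Rd.reduce_eq : ∀ {L : List (α × Bool)}, Rd L → reduce L = L
  | [], _ => rfl
  | x :: L, h => by
    have ht : Rd L := h.tail
    rw [reduce.cons, Rd.reduce_eq ht]
    cases L with
    | nil => rfl
    | cons hd tl =>
      have : ¬(x.1 = hd.1 ∧ x.2 = !hd.2) := (List.isChain_cons_cons.1 h).1
      simp [this]

lemma toWord_mk_rd {L : List (α × Bool)} (h : Rd L) : (mk L).toWord = L := by
  rw [FreeGroup.toWord_mk, h.reduce_eq]

lemma rd_toWord (x : FreeGroup α) : Rd x.toWord := by
  rw [← FreeGroup.reduce_toWord]; exact rd_reduce _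

lemma norm_mk_rd {L : List (α × Bool)} (h : Rd L) : (mk L).norm = L.length := by
  simp [FreeGroup.norm, toWord_mk_rd h]

lemma rd_invRev {L : List (α × Bool)} (h : Rd L) : Rd (invRev L) := by
  have := rd_reduce (invRev L)
  rwa [FreeGroup.reduce_invRev, h.reduce_eq] at this

lemma head?_invRev (L : List (α × Bool)) :
    (invRev L).head? = L.getLast?.map (fun g => (g.1, !g.2)) := by
  rw [FreeGroup.invRev, List.head?_reverse, List.getLast?_map]

lemma getLast?_invRev (L : List (α × Bool)) :
    (invRev L).getLast? = L.head?.map (fun g => (g.1, !g.2)) := by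
  rw [FreeGroup.invRev, List.getLast?_reverse, List.head?_map]

lemma mk_cancel (L₁ L₂ : List (α × Bool)) (x : α) (b : Bool) :
    mk (L₁ ++ (x, b) :: (x, !b) :: L₂) = mk (L₁ ++ L₂) :=
  Quot.sound FreeGroup.Red.Step.not

lemma of_eq_mk (x : α) : of x = mk [(x, true)] := rfl

lemma inv_of_eq_mk (x : α) : (of x)⁻¹ = mk [(x, false)] := by
  rw [of_eq_mk, FreeGroup.inv_mk]
  simp [FreeGroup.invRev]

/-- cyclic reduction of a reduced word -/
def cyc : List (α × Bool) → List (α × Bool)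
  | [] => []
  | a :: M => if M.getLast? = some (a.1, !a.2) then cyc M.dropLast else a :: M
  termination_by L => L.length
  decreasing_by simp [List.length_dropLast]

@[simp] lemma cyc_nil : cyc ([] : List (α × Bool)) = [] := by rw [cyc.eq_1]

lemma cyc_cons (a : α × Bool) (M : List (α × Bool)) :
    cyc (a :: M) = if M.getLast? = some (a.1, !a.2) then cyc M.dropLast else a :: M := by
  rw [cyc.eq_2]

lemma cyc_length_le : ∀ L : List (α × Bool), (cyc L).length ≤ L.length
  | [] => by simp
  | a :: M => by
    rw [cyc_cons]
    split
    · have h1 := cyc_length_le M.dropLast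
      have h2 : M.dropLast.length = M.length - 1 := List.length_dropLast
      simp only [List.length_cons]
      omega
    · exact le_refl _
  termination_by L => L.length
  decreasing_by simp [List.length_dropLast]

def cycLen (x : FreeGroup α) : ℕ := (cyc x.toWord).length

lemma cycLen_le_norm (x : FreeGroup α) : cycLen x ≤ x.norm := cyc_length_le _


lemma pair_not_inj (p q : α × Bool) : (p.1, !p.2) = (q.1, !q.2) ↔ p = q := by
  obtain ⟨x, b⟩ := p; obtain ⟨y, c⟩ := q; cases b <;> cases c <;> simp

lemma eq_swap_not (p q : α × Bool) : p = (q.1, !q.2) ↔ q = (p.1, !p.2) := by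
  obtain ⟨x, b⟩ := p; obtain ⟨y, c⟩ := q; cases b <;> cases c <;> simp [eq_comm]

lemma cycLen_conj_letter (a : α × Bool) (v : FreeGroup α) :
    cycLen (mk [a] * v * mk [(a.1, !a.2)]) = cycLen v := by
  obtain ⟨L, hL, rfl⟩ : ∃ L, Rd L ∧ mk L = v := ⟨v.toWord, rd_toWord v, FreeGroup.mk_toWord⟩
  rw [FreeGroup.mul_mk, FreeGroup.mul_mk]
  unfold cycLen
  rw [toWord_mk_rd hL]
  rcases L with _ | ⟨p, M⟩
  · have e1 : ([a] ++ ([] : List (α × Bool))) ++ [(a.1, !a.2)] =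
        ([] : List (α × Bool)) ++ (a.1, a.2) :: (a.1, !a.2) :: [] := by simp
    rw [e1, mk_cancel]
    simp [FreeGroup.toWord_mk]
  by_cases hp : p = (a.1, !a.2)
  · subst hp
    have e1 : ([a] ++ ((a.1, !a.2) :: M)) ++ [(a.1, !a.2)] =
        ([] : List (α × Bool)) ++ (a.1, a.2) :: (a.1, !a.2) :: (M ++ [(a.1, !a.2)]) := by simp
    rw [e1, mk_cancel, List.nil_append]
    have hM : Rd M := hL.tail
    rcases M.eq_nil_or_concat' with rfl | ⟨S, s, rfl⟩
    · rw [List.nil_append, toWord_mk_rd (List.isChain_singleton _)]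
    by_cases hs : s = a
    · subst hs
      -- here `a` has been replaced by `s`
      have hRdS : Rd S := (List.isChain_append.1 (show Rd (S ++ [s]) from hM)).1
      have e2 : (S ++ [s]) ++ [(s.1, !s.2)] = S ++ (s.1, s.2) :: (s.1, !s.2) :: [] := by simp
      rw [e2, mk_cancel, List.append_nil, toWord_mk_rd hRdS]
      rw [cyc_cons, if_pos (by simp)]
      simp
    · have hRdW : Rd ((S ++ [s]) ++ [(a.1, !a.2)]) := by
        rw [Rd, List.isChain_append]
        refine ⟨hM, List.isChain_singleton _, ?_⟩
        intro x hx y hy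
        simp only [List.head?_cons, Option.mem_def, Option.some.injEq] at hy
        subst hy
        simp only [List.getLast?_concat, Option.mem_def, Option.some.injEq] at hx
        subst hx
        rw [R_iff']
        simpa using hs
      rw [toWord_mk_rd hRdW]
      have hRHS : cyc ((a.1, !a.2) :: (S ++ [s])) = (a.1, !a.2) :: (S ++ [s]) := by
        rw [cyc_cons, if_neg]
        simp only [List.getLast?_concat, Option.some.injEq, Bool.not_not, Prod.mk.eta]
        exact hs
      have hLHS : cyc ((S ++ [s]) ++ [(a.1, !a.2)]) = (S ++ [s]) ++ [(a.1, !a.2)] := by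
        rcases S with _ | ⟨t, S'⟩
        · show cyc (s :: [(a.1, !a.2)]) = _
          rw [cyc_cons, if_neg]
          · simp
          · simp only [List.getLast?_singleton, Option.some.injEq, pair_not_inj]
            exact fun h => hs h.symm
        · have hta : t ≠ a := by
            have h0 := (List.isChain_cons.1 hL).1 t (by simp)
            rw [R_iff] at h0
            simpa using h0
          show cyc (t :: ((S' ++ [s]) ++ [(a.1, !a.2)])) = _
          rw [cyc_cons, if_neg]
          · simp
          · simp only [List.getLast?_concat, Option.some.injEq, pair_not_inj]
            exact fun h => hta h.symm
      rw [hRHS, hLHS]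
      simp
  · -- head does not cancel
    rcases M.eq_nil_or_concat' with rfl | ⟨S, s, rfl⟩
    · -- L = [p]
      by_cases hpa : p = a
      · subst hpa
        -- `a` replaced by `p`
        have e1 : ([p] ++ [p]) ++ [(p.1, !p.2)] = [p] ++ (p.1, p.2) :: (p.1, !p.2) :: [] := by simp
        rw [e1, mk_cancel, List.append_nil, toWord_mk_rd (List.isChain_singleton _)]
      · have hRdW : Rd ([a] ++ [p] ++ [(a.1, !a.2)]) := by
          rw [show [a] ++ [p] ++ [(a.1, !a.2)] = [a, p, (a.1, !a.2)] by simp, Rd,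
            List.isChain_cons_cons, List.isChain_cons_cons]
          refine ⟨(R_iff _ _).2 hp, (R_iff' _ _).2 (by simpa using hpa), List.isChain_singleton _⟩
        rw [toWord_mk_rd hRdW]
        rw [show ([a] ++ [p]) ++ [(a.1, !a.2)] = a :: [p, (a.1, !a.2)] by simp]
        rw [cyc_cons, if_pos (by simp)]
        simp
    · -- L = p :: S ++ [s]
      by_cases hs : s = a
      · subst hs
        -- `a` replaced by `s`
        have hps : p ≠ (s.1, !s.2) := hp
        have e1 : ([s] ++ (p :: (S ++ [s]))) ++ [(s.1, !s.2)] =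
            (s :: p :: S) ++ (s.1, s.2) :: (s.1, !s.2) :: [] := by simp
        rw [e1, mk_cancel, List.append_nil]
        have hRdpS : Rd (p :: S) := by
          have h1 : Rd ((p :: S) ++ [s]) := by simpa using hL
          exact (List.isChain_append.1 h1).1
        have hlast : ∀ x ∈ (p :: S).getLast?, x ≠ (s.1, !s.2) := by
          have h1 : Rd ((p :: S) ++ [s]) := by simpa using hL
          intro x hx
          have := (List.isChain_append.1 h1).2.2 x hx s (by simp)
          rw [R_iff'] at this
          exact this
        have hRdW : Rd (s :: p :: S) := by
          rw [Rd, List.isChain_cons_cons]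
          exact ⟨(R_iff _ _).2 hps, hRdpS⟩
        rw [toWord_mk_rd hRdW]
        have hcond : ¬((p :: S).getLast? = some (s.1, !s.2)) := fun h => hlast _ h rfl
        rw [cyc_cons, if_neg hcond, cyc_cons, if_neg]
        · simp
        · simp only [List.getLast?_concat, Option.some.injEq]
          intro hh
          exact hps ((eq_swap_not p s).2 hh)
      · -- generic case : no cancellation at all
        have hRdW : Rd (a :: ((p :: (S ++ [s])) ++ [(a.1, !a.2)])) := by
          rw [Rd, List.isChain_cons]
          constructor
          · intro y hy
            have hy' : y = p := (by simpa using hy : p = y).symm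
            subst hy'
            exact (R_iff _ _).2 hp
          · rw [List.isChain_append]
            refine ⟨hL, List.isChain_singleton _, ?_⟩
            intro x hx y hy
            have hy' : y = (a.1, !a.2) := (by simpa using hy : (a.1, !a.2) = y).symm
            subst hy'
            have hgl : (p :: (S ++ [s])).getLast? = some s := by
              rw [show p :: (S ++ [s]) = (p :: S) ++ [s] by simp, List.getLast?_concat]
            rw [Option.mem_def, hgl, Option.some_inj] at hx
            subst hx
            rw [R_iff']
            simpa using hs
        rw [show ([a] ++ (p :: (S ++ [s]))) ++ [(a.1, !a.2)] =
          a :: ((p :: (S ++ [s])) ++ [(a.1, !a.2)]) by simp]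
        rw [toWord_mk_rd hRdW]
        rw [cyc_cons, if_pos List.getLast?_concat, List.dropLast_concat]

lemma not_eq_pair (p : α × Bool) (x : α) (b : Bool) : (p.1, !p.2) = (x, b) ↔ p = (x, !b) := by
  obtain ⟨y, c⟩ := p; cases c <;> cases b <;> simp

lemma cycLen_conj (c : FreeGroup α) : ∀ v : FreeGroup α, cycLen (c * v * c⁻¹) = cycLen v := by
  induction c using FreeGroup.induction_on with
  | C1 => intro v; simp
  | of x => intro v; exact cycLen_conj_letter (x, true) v
  | inv_of x _ => intro v; exact cycLen_conj_letter (x, false) v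
  | mul x y hx hy =>
    intro v
    have e : (x * y) * v * (x * y)⁻¹ = x * (y * v * y⁻¹) * x⁻¹ := by group
    rw [e, hx, hy]

lemma cycLen_isConj {g w : FreeGroup α} (h : IsConj g w) : cycLen w = cycLen g := by
  obtain ⟨c, hc⟩ := isConj_iff.1 h
  rw [← hc, cycLen_conj]

lemma key {i j : α} :
    ∀ n (u : FreeGroup α), u.norm = n →
      (∃ g : FreeGroup α, FreeGroup.norm g ≤ 2 ∧ IsConj g (of i * u * of j * u⁻¹)) →
      ∃ k m : ℤ, u = of i ^ k * of j ^ m := by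
  intro n
  induction n using Nat.strong_induction_on with
  | _ n ih =>
    intro u hn hconj
    have hnormdef : u.norm = u.toWord.length := rfl
    by_cases h0 : u.toWord = []
    · exact ⟨0, 0, by simp [FreeGroup.toWord_eq_nil_iff.1 h0]⟩
    have hmk : mk u.toWord = u := FreeGroup.mk_toWord
    have hRd : Rd u.toWord := rd_toWord u
    by_cases hb : u.toWord.head? = some (i, true)
    · obtain ⟨T, hT⟩ : ∃ T, u.toWord = (i, true) :: T := by
        cases hLw : u.toWord with
        | nil => exact absurd hLw h0
        | cons q T =>
          rw [hLw, List.head?_cons, Option.some_inj] at hb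
          exact ⟨T, by rw [hb]⟩
      have hRdT : Rd T := by
        have h1 := hRd; rw [hT] at h1; exact h1.tail
      have hTw : (mk T).toWord = T := toWord_mk_rd hRdT
      have hu : u = of i * mk T := by
        rw [← hmk, hT, of_eq_mk, FreeGroup.mul_mk]
        rfl
      have hnorm : (mk T).norm = T.length := norm_mk_rd hRdT
      have hlen : T.length + 1 = n := by
        rw [← hn, hnormdef, hT]; simp
      obtain ⟨g, hg2, hgc⟩ := hconj
      have e : (of i)⁻¹ * (of i * u * of j * u⁻¹) * ((of i)⁻¹)⁻¹ =
          of i * mk T * of j * (mk T)⁻¹ := by rw [hu]; group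
      obtain ⟨k, m, hkm⟩ := ih T.length (by omega) (mk T) hnorm
        ⟨g, hg2, hgc.trans (isConj_iff.2 ⟨(of i)⁻¹, e⟩)⟩
      exact ⟨k + 1, m, by rw [hu, hkm]; group⟩
    by_cases hcb : u.toWord.head? = some (i, false)
    · obtain ⟨T, hT⟩ : ∃ T, u.toWord = (i, false) :: T := by
        cases hLw : u.toWord with
        | nil => exact absurd hLw h0
        | cons q T =>
          rw [hLw, List.head?_cons, Option.some_inj] at hcb
          exact ⟨T, by rw [hcb]⟩
      have hRdT : Rd T := by
        have h1 := hRd; rw [hT] at h1; exact h1.tail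
      have hiu : of i * u = mk T := by
        rw [← hmk, hT, of_eq_mk, FreeGroup.mul_mk]
        exact mk_cancel [] T i true
      have hu : u = (of i)⁻¹ * mk T := by rw [← hiu]; group
      have hnorm : (mk T).norm = T.length := norm_mk_rd hRdT
      have hlen : T.length + 1 = n := by
        rw [← hn, hnormdef, hT]; simp
      obtain ⟨g, hg2, hgc⟩ := hconj
      have e : of i * (of i * u * of j * u⁻¹) * (of i)⁻¹ =
          of i * mk T * of j * (mk T)⁻¹ := by rw [hu]; group
      obtain ⟨k, m, hkm⟩ := ih T.length (by omega) (mk T) hnorm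
        ⟨g, hg2, hgc.trans (isConj_iff.2 ⟨of i, e⟩)⟩
      exact ⟨k - 1, m, by rw [hu, hkm]; group⟩
    by_cases hd : u.toWord.getLast? = some (j, true)
    · obtain ⟨S, hS⟩ : ∃ S, u.toWord = S ++ [(j, true)] := by
        rcases u.toWord.eq_nil_or_concat' with h | ⟨S, b, hSb⟩
        · exact absurd h h0
        · rw [hSb, List.getLast?_concat, Option.some_inj] at hd
          exact ⟨S, by rw [hSb, hd]⟩
      have hRdS : Rd S := by
        have h1 := hRd; rw [hS] at h1; exact (List.isChain_append.1 h1).1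
      have hu : u = mk S * of j := by
        rw [← hmk, hS, of_eq_mk, ← FreeGroup.mul_mk]
      have hnorm : (mk S).norm = S.length := norm_mk_rd hRdS
      have hlen : S.length + 1 = n := by
        rw [← hn, hnormdef, hS]; simp
      obtain ⟨g, hg2, hgc⟩ := hconj
      have e : of i * u * of j * u⁻¹ = of i * mk S * of j * (mk S)⁻¹ := by
        rw [hu]; group
      obtain ⟨k, m, hkm⟩ := ih S.length (by omega) (mk S) hnorm ⟨g, hg2, e ▸ hgc⟩
      exact ⟨k, m + 1, by rw [hu, hkm]; group⟩
    by_cases he : u.toWord.getLast? = some (j, false)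
    · obtain ⟨S, hS⟩ : ∃ S, u.toWord = S ++ [(j, false)] := by
        rcases u.toWord.eq_nil_or_concat' with h | ⟨S, b, hSb⟩
        · exact absurd h h0
        · rw [hSb, List.getLast?_concat, Option.some_inj] at he
          exact ⟨S, by rw [hSb, he]⟩
      have hRdS : Rd S := by
        have h1 := hRd; rw [hS] at h1; exact (List.isChain_append.1 h1).1
      have hju : u * of j = mk S := by
        rw [← hmk, hS, of_eq_mk, FreeGroup.mul_mk,
          show (S ++ [(j, false)]) ++ [(j, true)] = S ++ (j, false) :: (j, !false) :: [] from by simp,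
          mk_cancel, List.append_nil]
      have hu : u = mk S * (of j)⁻¹ := by rw [← hju]; group
      have hnorm : (mk S).norm = S.length := norm_mk_rd hRdS
      have hlen : S.length + 1 = n := by
        rw [← hn, hnormdef, hS]; simp
      obtain ⟨g, hg2, hgc⟩ := hconj
      have e : of i * u * of j * u⁻¹ = of i * mk S * of j * (mk S)⁻¹ := by
        rw [hu]; group
      obtain ⟨k, m, hkm⟩ := ih S.length (by omega) (mk S) hnorm ⟨g, hg2, e ▸ hgc⟩
      exact ⟨k, m - 1, by rw [hu, hkm]; group⟩
    · -- irreducible case : contradiction via cyclic length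
      exfalso
      obtain ⟨g, hg2, hgc⟩ := hconj
      set L := u.toWord with hLdef
      have hIRne : invRev L ≠ [] := by
        intro h
        apply h0
        have := congrArg List.length h
        rw [FreeGroup.invRev_length] at this
        exact List.length_eq_zero_iff.1 this
      have hw : of i * u * of j * u⁻¹ = mk ((i, true) :: (L ++ (j, true) :: invRev L)) := by
        rw [← hmk, FreeGroup.inv_mk, of_eq_mk i, of_eq_mk j, FreeGroup.mul_mk,
          FreeGroup.mul_mk, FreeGroup.mul_mk]
        congr 1
        simp
      have hRdIR : Rd (invRev L) := rd_invRev hRd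
      have hRdW : Rd ((i, true) :: (L ++ (j, true) :: invRev L)) := by
        rw [Rd, List.isChain_cons]
        constructor
        · intro y hy
          rw [Option.mem_def, List.head?_append_of_ne_nil _ h0] at hy
          rw [R_iff]
          intro hy2
          apply hcb
          rw [hy]
          have hy3 : y = (i, false) := by simpa using hy2
          rw [hy3]
        · rw [List.isChain_append]
          refine ⟨hRd, ?_, ?_⟩
          · rw [List.isChain_cons]
            constructor
            · intro y hy
              rw [Option.mem_def, head?_invRev] at hy
              obtain ⟨q, hq1, hq2⟩ := Option.map_eq_some_iff.1 hy
              subst hq2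
              rw [R_iff]
              intro hy2
              apply hd
              rw [hq1]
              congr 1
              have : q = (j, !false) := by
                rw [← not_eq_pair q j false]
                simpa using hy2
              simpa using this
            · exact hRdIR
          · intro x hx y hy
            have hy' : y = (j, true) := (by simpa using hy : (j, true) = y).symm
            subst hy'
            rw [R_iff']
            intro hx2
            apply he
            rw [Option.mem_def] at hx
            rw [hx]
            simpa using hx2
      have hglW : (L ++ (j, true) :: invRev L).getLast? = L.head?.map (fun g => (g.1, !g.2)) := by
        rw [List.getLast?_append_cons,
          show (j, true) :: invRev L = [(j, true)] ++ invRev L from rfl,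
          List.getLast?_append_of_ne_nil _ hIRne, getLast?_invRev]
      obtain ⟨p, hp⟩ : ∃ p, L.head? = some p := by
        cases hLw : L with
        | nil => exact absurd hLw h0
        | cons q T => exact ⟨q, rfl⟩
      have hcycW : cyc ((i, true) :: (L ++ (j, true) :: invRev L)) =
          (i, true) :: (L ++ (j, true) :: invRev L) := by
        rw [cyc_cons, if_neg]
        rw [hglW, hp]
        simp only [Option.map_some, Option.some.injEq]
        intro hcontr
        apply hb
        rw [hp]
        congr 1
        have : p = (i, !(!true)) := by
          rw [← not_eq_pair p i (!true)]
          simpa using hcontr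
        simpa using this
      have hLpos : 0 < L.length := List.length_pos_iff.2 h0
      have hcyclen : cycLen (of i * u * of j * u⁻¹) = 2 * L.length + 2 := by
        unfold cycLen
        rw [hw, toWord_mk_rd hRdW, hcycW]
        simp [FreeGroup.invRev_length]
        ring
      have h1 : cycLen (of i * u * of j * u⁻¹) = cycLen g := cycLen_isConj hgc
      have h2 : cycLen g ≤ 2 := le_trans (cycLen_le_norm g) hg2
      omega

end FGConjAux


/-- If `i ≠ j` and `(of i) * u * (of j) * u⁻¹` is conjugate to an element of
reduced word length at most `2`, then `u = (of i)^k * (of j)^m` for some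
integers `k, m`; consequently
`u * (of j) * u⁻¹ = (of i)^k * (of j) * (of i)^(-k)`. -/
theorem freeGroup_conj_short_implies_power {α : Type*} [DecidableEq α]
    {i j : α} (hij : i ≠ j) (u : FreeGroup α)
    (h : ∃ g : FreeGroup α, FreeGroup.norm g ≤ 2 ∧
      IsConj g (FreeGroup.of i * u * FreeGroup.of j * u⁻¹)) :
    ∃ k m : ℤ, u = FreeGroup.of i ^ k * FreeGroup.of j ^ m ∧
      u * FreeGroup.of j * u⁻¹ =
        FreeGroup.of i ^ k * FreeGroup.of j * FreeGroup.of i ^ (-k) := by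
  obtain ⟨k, m, hkm⟩ := FGConjAux.key u.norm u rfl h
  exact ⟨k, m, hkm, by rw [hkm]; group⟩
end

section
/- Let α be a type and let φ be an automorphism of the free group on α such that: (1) for every i ∈ α, φ(of i) is conjugate to of i; and (2) for all distinct i, j ∈ α, φ((of i) * (of j)) is conjugate to an element whose reduced word has length at most 2. Then φ is an inner automorphism: there exists v in the free group with φ(g) = v * g * v⁻¹ for all g. -/
namespace FGAux
open FreeGroup List

set_option linter.unusedSectionVars false

variable {α : Type*} [DecidableEq α]

/-- Non-cancellation of adjacent letters. -/
def NC (a b : α × Bool) : Prop := ¬(a.1 = b.1 ∧ a.2 = !b.2)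

lemma NC_inv {a b : α × Bool} : NC (b.1, !b.2) (a.1, !a.2) ↔ NC a b := by
  unfold NC
  constructor
  · intro h ⟨h1, h2⟩; exact h ⟨h1.symm, by simp [h2]⟩
  · intro h ⟨h1, h2⟩; exact h ⟨h1.symm, by simp at h2; simp [h2]⟩

lemma reduce_eq_self_iff (w : List (α × Bool)) :
    reduce w = w ↔ List.IsChain NC w := by
  induction w with
  | nil => simp
  | cons x L ih =>
    constructor
    · intro h
      rcases hM : reduce L with _ | ⟨h2, t2⟩
      · rw [reduce.cons, hM] at h
        simp only [List.cons.injEq] at h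
        rw [← h.2]
        simp
      · rw [reduce.cons, hM] at h
        replace h : (if x.1 = h2.1 ∧ x.2 = !h2.2 then t2 else x :: h2 :: t2) = x :: L := h
        by_cases hcan : x.1 = h2.1 ∧ x.2 = !h2.2
        · rw [if_pos hcan] at h
          exfalso
          have hlen := Red.length_le (reduce.red (L := L))
          rw [hM, h] at hlen
          simp at hlen
        · rw [if_neg hcan] at h
          simp only [List.cons.injEq, true_and] at h
          subst h
          exact List.IsChain.cons_cons hcan (ih.mp hM)
    · intro hC
      have hL : reduce L = L := ih.mpr hC.tail
      rw [reduce.cons, hL]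
      cases L with
      | nil => rfl
      | cons h2 t2 =>
        show (if x.1 = h2.1 ∧ x.2 = !h2.2 then t2 else x :: h2 :: t2) = x :: h2 :: t2
        rw [if_neg (hC.rel_head)]

lemma toWord_mk_of_chain {w : List (α × Bool)} (h : List.IsChain NC w) :
    (mk w).toWord = w := by
  rw [toWord_mk, (reduce_eq_self_iff w).mpr h]

lemma norm_mk_of_chain {w : List (α × Bool)} (h : List.IsChain NC w) :
    norm (mk w) = w.length := by
  show (mk w).toWord.length = w.length
  rw [toWord_mk_of_chain h]

lemma toWord_chain (g : FreeGroup α) : List.IsChain NC g.toWord :=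
  (reduce_eq_self_iff _).mp (reduce_toWord g)

lemma invRev_cons (x : α × Bool) (t : List (α × Bool)) :
    invRev (x :: t) = invRev t ++ [(x.1, !x.2)] := by
  simp [invRev]

lemma invRev_singleton (x : α × Bool) : invRev [x] = [(x.1, !x.2)] := by
  simp [invRev]

lemma chain_invRev {t : List (α × Bool)} (h : List.IsChain NC t) :
    List.IsChain NC (invRev t) := by
  rw [invRev, List.isChain_reverse, List.isChain_map]
  exact h.imp (fun a b hab => NC_inv.mpr hab)

lemma head?_invRev (t : List (α × Bool)) :
    (invRev t).head? = t.getLast?.map (fun x => (x.1, !x.2)) := by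
  rw [invRev, List.head?_reverse, List.getLast?_map]

lemma getLast?_invRev (t : List (α × Bool)) :
    (invRev t).getLast? = t.head?.map (fun x => (x.1, !x.2)) := by
  rw [invRev, List.getLast?_reverse, List.head?_map]

lemma mk_cons (x : α × Bool) (t : List (α × Bool)) :
    mk (x :: t) = mk [x] * mk t := by rw [mul_mk]; rfl

lemma mk_cancel_pair (x : α) (b : Bool) :
    mk [(x, b), (x, !b)] = (1 : FreeGroup α) := by
  rw [one_eq_mk]
  exact Quot.sound (@Red.Step.not α [] [] x b)

lemma chain'_wrap {x z : α × Bool} {l : List (α × Bool)} (hne : l ≠ []) (hl : List.IsChain NC l)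
    (hxl : ∀ y ∈ l.head?, NC x y) (hlz : ∀ y ∈ l.getLast?, NC y z) :
    List.IsChain NC (x :: (l ++ [z])) := by
  rw [List.isChain_cons]
  constructor
  · intro y hy
    cases l with
    | nil => exact absurd rfl hne
    | cons a l' =>
      simp only [List.cons_append, List.head?_cons, Option.mem_def, Option.some.injEq] at hy
      subst hy; exact hxl a (by simp)
  · rw [List.isChain_append]
    refine ⟨hl, List.isChain_singleton _, ?_⟩
    intro y hy z' hz'
    simp only [List.head?_cons, Option.mem_def, Option.some.injEq] at hz'
    subst hz'
    exact hlz y hy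

/-- The cyclic non-cancellation condition: the last letter does not cancel the
first letter. -/
def CycOK (w : List (α × Bool)) : Prop :=
  ∀ x ∈ w.head?, ∀ y ∈ w.getLast?, ¬(y.1 = x.1 ∧ y.2 = !x.2)

lemma conj_struct (n : ℕ) : ∀ (c : FreeGroup α) (w : List (α × Bool)),
    norm c ≤ n → List.IsChain NC w → CycOK w →
    ∃ t w' : List (α × Bool), List.IsChain NC w' ∧ CycOK w' ∧ w'.length = w.length ∧
      List.IsChain NC (t ++ w' ++ invRev t) ∧
      c * mk w * c⁻¹ = mk t * mk w' * (mk t)⁻¹ := by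
  induction n with
  | zero =>
    intro c w hc hw hcyc
    have : c = 1 := norm_eq_zero.mp (Nat.le_zero.mp hc)
    subst this
    exact ⟨[], w, hw, hcyc, rfl, by simpa [invRev] using hw, by simp [one_eq_mk]⟩
  | succ n ih =>
    intro c w hc hw hcyc
    rcases hA : toWord c with _ | ⟨a, L⟩
    · have : c = 1 := toWord_eq_nil_iff.mp hA
      subst this
      exact ⟨[], w, hw, hcyc, rfl, by simpa [invRev] using hw, by simp [one_eq_mk]⟩
    · obtain ⟨a1, a2⟩ := a
      have hred : List.IsChain NC ((a1, a2) :: L) := by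
        rw [← hA]; exact toWord_chain c
      have hc2 : c = mk [(a1, a2)] * mk L := by
        rw [← mk_cons, ← hA, mk_toWord]
      have hnormL : norm (mk L) ≤ n := by
        have : norm (mk L) = L.length := norm_mk_of_chain hred.tail
        have hcl : norm c = L.length + 1 := by
          show c.toWord.length = _
          rw [hA]; simp
        omega
      obtain ⟨t, w', hw'red, hw'cyc, hlen, hbig, heq⟩ := ih (mk L) w hnormL hw hcyc
      have key : c * mk w * c⁻¹ = mk [(a1, a2)] * (mk t * mk w' * (mk t)⁻¹) * (mk [(a1, a2)])⁻¹ := by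
        rw [hc2, ← heq]; group
      clear heq hc2 hA hred hnormL hc
      rcases t with _ | ⟨⟨h1, h2⟩, t₂⟩
      · -- t = [] : conjugating the cyclically reduced word w' by a single letter
        have key' : c * mk w * c⁻¹ = mk [(a1, a2)] * mk w' * (mk [(a1, a2)])⁻¹ := by
          rw [key, ← one_eq_mk]; group
        rcases w' with _ | ⟨⟨x1, x2⟩, u⟩
        · refine ⟨[], [], by simp, by simp [CycOK], by simpa using hlen, by simp [invRev], ?_⟩
          rw [key', ← one_eq_mk]; group
        · by_cases hax : a1 = x1 ∧ a2 = !x2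
          · -- the letter cancels the head: rotate left
            have hh1 : a1 = x1 := hax.1
            have hh2 : x2 = !a2 := by rw [hax.2, Bool.not_not]
            subst hh2; subst hh1
            have hchain : List.IsChain NC (u ++ [(a1, !a2)]) := by
              rw [List.isChain_append]
              refine ⟨hw'red.tail, List.isChain_singleton _, ?_⟩
              intro y hy z hz
              simp only [List.head?_cons, Option.mem_def, Option.some.injEq] at hz
              subst hz
              have hy' : y ∈ ((a1, !a2) :: u).getLast? := by
                cases u with
                | nil => simp at hy
                | cons v u' => simpa using hy
              exact hw'cyc (a1, !a2) (by simp) y hy'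
            have hcyc' : CycOK (u ++ [(a1, !a2)]) := by
              intro x hx y hy
              rw [List.getLast?_concat] at hy
              simp only [Option.mem_def, Option.some.injEq] at hy
              subst hy
              cases u with
              | nil =>
                simp only [List.nil_append, List.head?_cons, Option.mem_def,
                  Option.some.injEq] at hx
                subst hx; simp
              | cons v u' =>
                simp only [List.cons_append, List.head?_cons, Option.mem_def,
                  Option.some.injEq] at hx
                subst hx
                exact hw'red.rel_head
            refine ⟨[], u ++ [(a1, !a2)], hchain, hcyc', by simpa using hlen,
              by simpa [invRev] using hchain, ?_⟩
            have hinv : mk [((a1:α), !a2)] = (mk [(a1, a2)])⁻¹ := by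
              rw [eq_inv_iff_mul_eq_one, mul_mk]
              have h0 := mk_cancel_pair a1 (!a2)
              rw [Bool.not_not] at h0
              exact h0
            rw [key', mk_cons (a1, !a2) u, hinv, ← mul_mk, hinv, ← one_eq_mk]
            group
          · by_cases hay : (a1, a2) = ((x1,x2) :: u).getLast (List.cons_ne_nil _ _)
            · -- the letter cancels the last letter: rotate right
              have hsplit : ((x1,x2) :: u).dropLast ++ [(a1, a2)] = (x1,x2) :: u := by
                rw [hay]; exact List.dropLast_append_getLast _
              have hred2 : List.IsChain NC (((x1,x2) :: u).dropLast ++ [(a1, a2)]) := by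
                rw [hsplit]; exact hw'red
              obtain ⟨hd1, -, hd3⟩ := List.isChain_append.mp hred2
              have hchain : List.IsChain NC ((a1, a2) :: ((x1,x2) :: u).dropLast) := by
                rw [List.isChain_cons]
                refine ⟨?_, hd1⟩
                intro y hy
                rw [List.head?_dropLast] at hy
                cases u with
                | nil => simp at hy
                | cons v u' =>
                  simp only [List.length_cons, Option.mem_def] at hy
                  rw [if_pos (by omega), List.head?_cons] at hy
                  simp only [Option.some.injEq] at hy
                  subst hy
                  have := hw'cyc (x1, x2) (by simp) (a1, a2)
                    (by rw [← hsplit, List.getLast?_concat]; rfl)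
                  exact this
              have hcyc' : CycOK ((a1, a2) :: ((x1,x2) :: u).dropLast) := by
                intro x hx y hy
                simp only [List.head?_cons, Option.mem_def, Option.some.injEq] at hx
                subst hx
                rcases hdl : ((x1,x2) :: u).dropLast with _ | ⟨z, zs⟩
                · rw [hdl] at hy
                  have : y = (a1, a2) := by simpa [eq_comm] using hy
                  subst this; simp
                · rw [hdl] at hy
                  rw [List.getLast?_cons_cons] at hy
                  have hy2 : y ∈ (z :: zs).getLast? := by
                    cases zs with
                    | nil => simpa using hy
                    | cons _ _ => simpa using hy
                  have := hd3 y (by rw [hdl]; exact hy2) (a1, a2) (by simp)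
                  exact this
              refine ⟨[], (a1, a2) :: ((x1,x2) :: u).dropLast, hchain, hcyc',
                ?_, by simpa [invRev] using hchain, ?_⟩
              · simp only [List.length_cons, List.length_dropLast]
                simp only [List.length_cons] at hlen ⊢
                omega
              · rw [← hsplit] at key'
                rw [key', ← mul_mk, mk_cons (a1, a2) (((x1,x2) :: u).dropLast), ← one_eq_mk]
                group
            · -- no cancellation
              have hlast : ((x1,x2) :: u).getLast? =
                  some (((x1,x2) :: u).getLast (List.cons_ne_nil _ _)) :=
                List.getLast?_eq_getLast_of_ne_nil _
              have hchain : List.IsChain NC ([(a1, a2)] ++ ((x1,x2) :: u) ++ invRev [(a1, a2)]) := by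
                rw [invRev_singleton]
                have heq2 : [(a1, a2)] ++ ((x1,x2) :: u) ++ [(a1, !a2)]
                    = (a1, a2) :: (((x1,x2) :: u) ++ [(a1, !a2)]) := by simp
                rw [heq2]
                refine chain'_wrap (List.cons_ne_nil _ _) hw'red ?_ ?_
                · intro y hy
                  simp only [List.head?_cons, Option.mem_def, Option.some.injEq] at hy
                  subst hy
                  exact hax
                · intro y hy
                  rw [hlast] at hy
                  simp only [Option.mem_def, Option.some.injEq] at hy
                  subst hy
                  intro hcon
                  apply hay
                  have : (((x1,x2) :: u).getLast (List.cons_ne_nil _ _)) = (a1, a2) := by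
                    ext
                    · exact hcon.1
                    · rw [hcon.2, Bool.not_not]
                  rw [this]
              exact ⟨[(a1, a2)], (x1,x2) :: u, hw'red, hw'cyc, hlen, hchain, key'⟩
      · -- t = h :: t₂
        by_cases hcan : a1 = h1 ∧ a2 = !h2
        · -- cancellation with the head of t
          have hh1 : a1 = h1 := hcan.1
          have hh2 : h2 = !a2 := by rw [hcan.2, Bool.not_not]
          subst hh2; subst hh1
          refine ⟨t₂, w', hw'red, hw'cyc, hlen, ?_, ?_⟩
          · refine hbig.infix ⟨[(a1, !a2)], [(a1, !(!a2))], ?_⟩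
            rw [invRev_cons]
            simp
          · have hinv : mk [((a1:α), !a2)] = (mk [(a1, a2)])⁻¹ := by
              rw [eq_inv_iff_mul_eq_one, mul_mk]
              have h0 := mk_cancel_pair a1 (!a2)
              rw [Bool.not_not] at h0
              exact h0
            rw [key, mk_cons (a1, !a2) t₂, hinv]
            group
        · -- no cancellation with the head of t
          refine ⟨(a1, a2) :: (h1, h2) :: t₂, w', hw'red, hw'cyc, hlen, ?_, ?_⟩
          · rw [invRev_cons]
            have heq2 : (a1, a2) :: (h1, h2) :: t₂ ++ w' ++ (invRev ((h1, h2) :: t₂) ++ [(a1, !a2)])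
                = (a1, a2) :: ((((h1, h2) :: t₂) ++ w' ++ invRev ((h1, h2) :: t₂)) ++ [(a1, !a2)]) := by
              simp
            rw [heq2]
            refine chain'_wrap (by simp) hbig ?_ ?_
            · intro y hy
              simp only [List.cons_append, List.append_assoc, List.head?_cons,
                Option.mem_def, Option.some.injEq] at hy
              subst hy
              exact hcan
            · intro y hy
              have hgl : (((h1, h2) :: t₂) ++ w' ++ invRev ((h1, h2) :: t₂)).getLast?
                  = some (h1, !h2) := by
                rw [List.getLast?_append_of_ne_nil _ (by rw [invRev_cons]; simp),
                  invRev_cons, List.getLast?_concat]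
              rw [hgl] at hy
              simp only [Option.mem_def, Option.some.injEq] at hy
              subst hy
              intro hcon
              apply hcan
              refine ⟨hcon.1.symm, ?_⟩
              have := hcon.2
              rw [Bool.not_not] at this
              rw [← this]
          · rw [key, mk_cons (a1, a2) ((h1, h2) :: t₂)]
            group

lemma norm_conj_ge {w : List (α × Bool)} (h1 : List.IsChain NC w) (h2 : CycOK w)
    (c : FreeGroup α) : w.length ≤ norm (c * mk w * c⁻¹) := by
  obtain ⟨t, w', hw'red, hw'cyc, hlen, hbig, heq⟩ :=
    conj_struct (norm c) c w le_rfl h1 h2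
  rw [heq, inv_mk, mul_mk, mul_mk, norm_mk_of_chain hbig]
  simp only [List.length_append, invRev_length]
  omega

lemma keyB (n : ℕ) : ∀ (u : FreeGroup α) (i j : α), i ≠ j → norm u ≤ n →
    (∃ g : FreeGroup α, norm g ≤ 2 ∧ IsConj g (of i * u * of j * u⁻¹)) →
    ∃ a b : ℤ, u = of i ^ a * of j ^ b := by
  induction n with
  | zero =>
    intro u i j hij hu hconj
    have : u = 1 := norm_eq_zero.mp (Nat.le_zero.mp hu)
    exact ⟨0, 0, by simp [this]⟩
  | succ n ih =>
    intro u i j hij hu hconj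
    rcases hA : toWord u with _ | ⟨⟨x1, x2⟩, L⟩
    · exact ⟨0, 0, by simp [toWord_eq_nil_iff.mp hA]⟩
    have hred : List.IsChain NC ((x1,x2) :: L) := by rw [← hA]; exact toWord_chain u
    have hu' : u = mk ((x1,x2) :: L) := by rw [← hA, mk_toWord]
    have hnu : norm u = L.length + 1 := by
      show u.toWord.length = _
      rw [hA]; simp
    by_cases hx : x1 = i
    · subst hx
      have hu2 : u = mk [((x1:α), x2)] * mk L := by rw [← mk_cons]; exact hu'
      have hs : mk [((x1:α), x2)] = of x1 ^ (if x2 then (1:ℤ) else -1) := by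
        cases x2
        · show mk [(x1, false)] = of x1 ^ (-1 : ℤ)
          rw [zpow_neg_one]
          show mk [(x1, false)] = (mk [(x1, true)])⁻¹
          rw [inv_mk, show invRev [((x1:α), true)] = [(x1, false)] from by simp [invRev]]
        · show mk [(x1, true)] = of x1 ^ (1 : ℤ)
          rw [zpow_one]; rfl
      have hXeq : of x1 * u * of j * u⁻¹
          = mk [((x1:α), x2)] * (of x1 * mk L * of j * (mk L)⁻¹) * (mk [((x1:α), x2)])⁻¹ := by
        rw [hu2, hs]; group
      have hconj' : ∃ g : FreeGroup α, norm g ≤ 2 ∧ IsConj g (of x1 * mk L * of j * (mk L)⁻¹) := by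
        obtain ⟨g, hg2, hgc⟩ := hconj
        refine ⟨g, hg2, ?_⟩
        rw [hXeq] at hgc
        exact hgc.trans (isConj_iff.mpr ⟨(mk [((x1:α), x2)])⁻¹, by group⟩)
      have hnL : norm (mk L) ≤ n := by
        rw [norm_mk_of_chain (w := L) hred.tail]; omega
      obtain ⟨a, b, hab⟩ := ih (mk L) x1 j hij hnL hconj'
      refine ⟨(if x2 then (1:ℤ) else -1) + a, b, ?_⟩
      rw [hu2, hs, hab, ← mul_assoc, ← zpow_add]
    · by_cases hylast : (((x1,x2) :: L).getLast (List.cons_ne_nil _ _)).1 = j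
      · -- peel the last letter, which is a power of `of j`
        have hsplit : ((x1,x2) :: L).dropLast ++ [((x1,x2) :: L).getLast (List.cons_ne_nil _ _)]
            = (x1,x2) :: L := List.dropLast_append_getLast _
        rcases hYd : ((x1,x2) :: L).getLast (List.cons_ne_nil _ _) with ⟨y1, y2⟩
        rw [hYd] at hsplit
        rw [hYd] at hylast
        have hylast' : j = y1 := hylast.symm
        subst hylast'
        have hu2 : u = mk (((x1,x2) :: L).dropLast) * mk [((j:α), y2)] := by
          rw [mul_mk, hsplit]; exact hu'
        have hs : mk [((j:α), y2)] = of j ^ (if y2 then (1:ℤ) else -1) := by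
          cases y2
          · show mk [(j, false)] = of j ^ (-1 : ℤ)
            rw [zpow_neg_one]
            show mk [(j, false)] = (mk [(j, true)])⁻¹
            rw [inv_mk, show invRev [((j:α), true)] = [(j, false)] from by simp [invRev]]
          · show mk [(j, true)] = of j ^ (1 : ℤ)
            rw [zpow_one]; rfl
        have hXeq : of i * u * of j * u⁻¹
            = of i * mk (((x1,x2) :: L).dropLast) * of j * (mk (((x1,x2) :: L).dropLast))⁻¹ := by
          rw [hu2, hs]; group
        have hchaind : List.IsChain NC (((x1,x2) :: L).dropLast) :=
          hred.prefix ⟨[((j:α), y2)], hsplit⟩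
        have hnL : norm (mk (((x1,x2) :: L).dropLast)) ≤ n := by
          rw [norm_mk_of_chain hchaind]
          have := congrArg List.length hsplit
          simp only [List.length_append, List.length_cons, List.length_singleton] at this
          omega
        obtain ⟨a, b, hab⟩ := ih (mk (((x1,x2) :: L).dropLast)) i j hij hnL
          (by obtain ⟨g, hg2, hgc⟩ := hconj; exact ⟨g, hg2, by rwa [hXeq] at hgc⟩)
        refine ⟨a, b + (if y2 then (1:ℤ) else -1), ?_⟩
        rw [hu2, hs, hab, zpow_add, ← mul_assoc]
      · -- contradiction: the word is cyclically reduced of length ≥ 4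
        exfalso
        obtain ⟨g, hg2, hgc⟩ := hconj
        set w : List (α × Bool) := (x1,x2) :: L with hwdef
        have hgl : w.getLast? = some (w.getLast (List.cons_ne_nil _ _)) :=
          List.getLast?_eq_getLast_of_ne_nil _
        set yl := w.getLast (List.cons_ne_nil _ _) with hyldef
        have hmkW : of i * u * of j * u⁻¹
            = mk (([(i,true)] ++ w ++ [(j,true)]) ++ invRev w) := by
          rw [hu', inv_mk]
          show mk [(i,true)] * mk w * mk [(j,true)] * mk (invRev w) = _
          rw [mul_mk, mul_mk, mul_mk]
        have hcons : ([(i,true)] ++ w ++ [(j,true)]) ++ invRev w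
            = (i,true) :: (w ++ ((j,true) :: invRev w)) := by simp
        have hchainW : List.IsChain NC (([(i,true)] ++ w ++ [(j,true)]) ++ invRev w) := by
          rw [hcons, List.isChain_cons]
          constructor
          · intro z hz
            rw [hwdef] at hz
            simp only [List.cons_append, List.head?_cons, Option.mem_def,
              Option.some.injEq] at hz
            subst hz
            exact fun hcon => hx hcon.1.symm
          · rw [List.isChain_append]
            refine ⟨hred, ?_, ?_⟩
            · rw [List.isChain_cons]
              refine ⟨?_, chain_invRev hred⟩
              intro z hz
              rw [head?_invRev, hgl] at hz
              simp only [Option.map_some, Option.mem_def, Option.some.injEq] at hz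
              subst hz
              exact fun hcon => hylast hcon.1.symm
            · intro z hz z' hz'
              rw [hgl] at hz
              simp only [Option.mem_def, Option.some.injEq] at hz
              subst hz
              simp only [List.head?_cons, Option.mem_def, Option.some.injEq] at hz'
              subst hz'
              exact fun hcon => hylast hcon.1
        have hcycW : CycOK (([(i,true)] ++ w ++ [(j,true)]) ++ invRev w) := by
          intro x hxm y hym
          rw [hcons] at hxm
          simp only [List.head?_cons, Option.mem_def, Option.some.injEq] at hxm
          subst hxm
          have hinvne : invRev w ≠ [] := by
            intro hcon
            have := congrArg List.length hcon
            rw [invRev_length] at this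
            simp [hwdef] at this
          rw [List.getLast?_append_of_ne_nil _ hinvne, getLast?_invRev, hwdef] at hym
          simp only [List.head?_cons, Option.map_some, Option.mem_def,
            Option.some.injEq] at hym
          subst hym
          exact fun hcon => hx hcon.1
        obtain ⟨c, hc⟩ := isConj_iff.mp (hmkW ▸ hgc.symm)
        have hge := norm_conj_ge hchainW hcycW c
        rw [hc] at hge
        have hlenW : (([(i,true)] ++ w ++ [(j,true)]) ++ invRev w).length = 2 * L.length + 4 := by
          simp [invRev_length, hwdef]
          omega
        omega

/-- The exponent sum of the generator `i` in an element of the free group. -/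
def sexp (i : α) (g : FreeGroup α) : ℤ :=
  Multiplicative.toAdd
    ((FreeGroup.lift fun j => Multiplicative.ofAdd (if j = i then (1:ℤ) else 0)) g)

lemma sexp_mul (i : α) (g h : FreeGroup α) : sexp i (g * h) = sexp i g + sexp i h := by
  simp [sexp]

lemma sexp_inv (i : α) (g : FreeGroup α) : sexp i g⁻¹ = - sexp i g := by
  simp [sexp]

lemma sexp_zpow (i : α) (g : FreeGroup α) (n : ℤ) : sexp i (g ^ n) = n * sexp i g := by
  simp [sexp, map_zpow, toAdd_zpow]

lemma sexp_of (i j : α) : sexp i (of j) = if j = i then 1 else 0 := by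
  simp [sexp, lift_apply_of]

end FGAux

/-- An automorphism of a free group which sends each basis element to a
conjugate of itself, and sends each product `(of i) * (of j)` of distinct basis
elements to a conjugate of an element of reduced word length at most `2`,
is an inner automorphism. -/
theorem freeGroup_aut_is_inner {α : Type*} [DecidableEq α]
    (φ : FreeGroup α ≃* FreeGroup α)
    (h1 : ∀ i : α, IsConj (FreeGroup.of i) (φ (FreeGroup.of i)))
    (h2 : ∀ i j : α, i ≠ j → ∃ g : FreeGroup α, FreeGroup.norm g ≤ 2 ∧
      IsConj g (φ (FreeGroup.of i * FreeGroup.of j))) :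
    ∃ v : FreeGroup α, ∀ g : FreeGroup α, φ g = v * g * v⁻¹ := by
  classical
  have h1' : ∀ i, ∃ c : FreeGroup α, c * FreeGroup.of i * c⁻¹ = φ (FreeGroup.of i) :=
    fun i => isConj_iff.mp (h1 i)
  choose cc hcc using h1'
  have hpair : ∀ i j : α, i ≠ j → ∃ a b : ℤ,
      (cc i)⁻¹ * cc j = FreeGroup.of i ^ a * FreeGroup.of j ^ b := by
    intro i j hij
    obtain ⟨g, hg2, hgc⟩ := h2 i j hij
    refine FGAux.keyB (FreeGroup.norm ((cc i)⁻¹ * cc j)) _ i j hij le_rfl ⟨g, hg2, ?_⟩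
    have hXeq : φ (FreeGroup.of i * FreeGroup.of j)
        = cc i * (FreeGroup.of i * ((cc i)⁻¹ * cc j) * FreeGroup.of j
            * ((cc i)⁻¹ * cc j)⁻¹) * (cc i)⁻¹ := by
      rw [map_mul, ← hcc i, ← hcc j]; group
    rw [hXeq] at hgc
    exact hgc.trans (isConj_iff.mpr ⟨(cc i)⁻¹, by group⟩)
  choose! aa bb hab using hpair
  obtain ⟨v, hv⟩ : ∃ v : FreeGroup α, ∀ i : α, ∃ k : ℤ,
      cc i = v * FreeGroup.of i ^ k := by
    by_cases hex : ∃ p : α × α, p.1 ≠ p.2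
    · obtain ⟨⟨i₀, j₀⟩, hij₀⟩ := hex
      refine ⟨cc i₀ * FreeGroup.of i₀ ^ aa i₀ j₀, fun i => ?_⟩
      by_cases hi0 : i = i₀
      · rw [hi0]
        exact ⟨- aa i₀ j₀, by group⟩
      · have h1' := hab i₀ i (fun h => hi0 h.symm)
        have ha : aa i₀ i = aa i₀ j₀ := by
          by_cases hj0 : i = j₀
          · rw [hj0]
          · have h2' := hab j₀ i (fun h => hj0 h.symm)
            have h3' := hab i₀ j₀ hij₀
            have hE : FreeGroup.of j₀ ^ aa j₀ i * FreeGroup.of i ^ bb j₀ i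
                = (FreeGroup.of i₀ ^ aa i₀ j₀ * FreeGroup.of j₀ ^ bb i₀ j₀)⁻¹
                  * (FreeGroup.of i₀ ^ aa i₀ i * FreeGroup.of i ^ bb i₀ i) := by
              rw [← h2', ← h3', ← h1']; group
            have hs := congrArg (FGAux.sexp i₀) hE
            have hji : (j₀ = i₀) = False := eq_false (Ne.symm hij₀)
            have hiI : (i = i₀) = False := eq_false hi0
            simp only [FGAux.sexp_mul, FGAux.sexp_inv, FGAux.sexp_zpow, FGAux.sexp_of,
              hji, hiI, if_true, if_false, if_pos rfl, mul_zero, mul_one, add_zero,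
              zero_add, neg_add_rev, neg_zero] at hs
            omega
        refine ⟨bb i₀ i, ?_⟩
        rw [show cc i = cc i₀ * ((cc i₀)⁻¹ * cc i) from by group, h1', ha]
        group
    · push_neg at hex
      cases isEmpty_or_nonempty α with
      | inl h => exact ⟨1, fun i => (IsEmpty.false i).elim⟩
      | inr h =>
        have i₀ : α := Classical.arbitrary α
        refine ⟨cc i₀, fun i => ?_⟩
        have hii : i = i₀ := hex (i, i₀)
        rw [hii]
        exact ⟨0, by group⟩
  have hgen : ∀ i : α, φ (FreeGroup.of i) = v * FreeGroup.of i * v⁻¹ := by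
    intro i
    obtain ⟨k, hk⟩ := hv i
    rw [← hcc i, hk]
    group
  refine ⟨v, fun g => ?_⟩
  have hext : (φ : FreeGroup α →* FreeGroup α) = (MulAut.conj v).toMonoidHom :=
    FreeGroup.ext_hom _ _ (fun a => by simpa [MulAut.conj_apply] using hgen a)
  have := DFunLike.congr_fun hext g
  simpa [MulAut.conj_apply] using this
end
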